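/- arXiv:1402.4535 — 3 statements merged into one kernel-verified Lean document; each statement's English description precedes it below -/
import Mathlib

section
/- There exists a universal constant c > 0 such that for every integer m ≥ 2, every real H ≥ 2, every ε ∈ (0, 1/2), and every probability distribution D supported on [1, H]^m, there exists a menu M with at most ((log₂ H + log₂ m + log₂(1/ε)) / ε)^{c·m} entries such that Rev_D(M) ≥ (1 − ε) · OPT(D). -/
open MeasureTheory

/-- An entry of a menu: a lottery (vector of allocation probabilities) together with a price. -/
abbrev Entry (m : ℕ) := (Fin m → ℝ) × ℝ

/-- A lottery: nonnegative coordinates summing to at most 1. -/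
def IsLottery (m : ℕ) (x : Fin m → ℝ) : Prop := (∀ j, 0 ≤ x j) ∧ ∑ j, x j ≤ 1

/-- A menu: a finite set of entries containing the null entry `(0, 0)`,
all of whose entries are lotteries. -/
def IsMenu (m : ℕ) (M : Finset (Entry m)) : Prop :=
  (0, 0) ∈ M ∧ ∀ e ∈ M, IsLottery m e.1

/-- Utility of entry `e` for a buyer with valuation `v`. -/
def utility {m : ℕ} (v : Fin m → ℝ) (e : Entry m) : ℝ := (∑ j, v j * e.1 j) - e.2

/-- A selection rule for menu `M`: picks, for each valuation, a utility-maximizing entry of `M`. -/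
def IsSelection {m : ℕ} (M : Finset (Entry m)) (s : (Fin m → ℝ) → Entry m) : Prop :=
  ∀ v, s v ∈ M ∧ ∀ e ∈ M, utility v e ≤ utility v (s v)

/-- Revenue of a selection rule `s` under distribution `D`: expected price paid. -/
noncomputable def revSel {m : ℕ} (D : Measure (Fin m → ℝ))
    (s : (Fin m → ℝ) → Entry m) : ℝ :=
  ∫ v, (s v).2 ∂D

/-- Revenue of menu `M` under distribution `D`: supremum over selection rules. -/
noncomputable def Rev {m : ℕ} (D : Measure (Fin m → ℝ)) (M : Finset (Entry m)) : ℝ :=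
  sSup {r | ∃ s, IsSelection M s ∧ r = revSel D s}

/-- Optimal revenue for a distribution `D`: supremum over all menus. -/
noncomputable def OPT {m : ℕ} (D : Measure (Fin m → ℝ)) : ℝ :=
  sSup {r | ∃ M : Finset (Entry m), IsMenu m M ∧ r = Rev D M}

set_option linter.unusedSectionVars false
set_option linter.dupNamespace false
set_option linter.unusedVariables false

namespace MenuAux

variable {m : ℕ}

lemma utility_zero (v : Fin m → ℝ) : utility v ((0,0) : Entry m) = 0 := by
  simp [utility]

noncomputable def pickL (v : Fin m → ℝ) : List (Entry m) → Entry m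
  | [] => ((0 : Fin m → ℝ), (0:ℝ))
  | e :: l => if utility v (pickL v l) < utility v e then e else pickL v l

lemma pickL_mem (v : Fin m → ℝ) (l : List (Entry m)) :
    pickL v l = ((0 : Fin m → ℝ), (0:ℝ)) ∨ pickL v l ∈ l := by
  induction l with
  | nil => left; rfl
  | cons e l ih =>
    simp only [pickL]
    split_ifs with h
    · right; exact List.mem_cons_self
    · rcases ih with h' | h'
      · left; exact h'
      · right; exact List.mem_cons_of_mem _ h'

lemma zero_le_pickL (v : Fin m → ℝ) (l : List (Entry m)) :
    0 ≤ utility v (pickL v l) := by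
  induction l with
  | nil => simp [pickL, utility]
  | cons e l ih =>
    simp only [pickL]
    split_ifs with h
    · linarith
    · exact ih

lemma le_pickL (v : Fin m → ℝ) (l : List (Entry m)) :
    ∀ e ∈ l, utility v e ≤ utility v (pickL v l) := by
  induction l with
  | nil => intro e he; cases he
  | cons e l ih =>
    intro e' he'
    simp only [pickL]
    split_ifs with h
    · rcases List.mem_cons.1 he' with rfl | h'
      · exact le_refl _
      · exact le_trans (ih e' h') (le_of_lt h)
    · rcases List.mem_cons.1 he' with rfl | h'
      · exact le_of_not_gt h
      · exact ih e' h'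

lemma measurable_utility_comp {f : (Fin m → ℝ) → Entry m} (hf : Measurable f) :
    Measurable fun v => utility v (f v) := by
  have h1 : Measurable fun v => (f v).1 := measurable_fst.comp hf
  have h2 : Measurable fun v => (f v).2 := measurable_snd.comp hf
  unfold utility
  exact (Finset.measurable_sum _ fun j _ =>
    (measurable_pi_apply j).mul ((measurable_pi_apply j).comp h1)).sub h2

lemma measurable_pickL (l : List (Entry m)) : Measurable fun v => pickL v l := by
  induction l with
  | nil => exact measurable_const
  | cons e l ih =>
    have hcond : MeasurableSet {v : Fin m → ℝ | utility v (pickL v l) < utility v e} :=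
      measurableSet_lt (measurable_utility_comp ih) (measurable_utility_comp measurable_const)
    simp only [pickL]
    exact Measurable.ite hcond measurable_const ih

noncomputable def sel (M : Finset (Entry m)) : (Fin m → ℝ) → Entry m :=
  fun v => pickL v M.toList

lemma sel_isSelection {M : Finset (Entry m)} (hM0 : ((0,0) : Entry m) ∈ M) :
    IsSelection M (sel M) := by
  intro v
  constructor
  · rcases pickL_mem v M.toList with h | h
    · rw [sel, h]; exact hM0
    · exact Finset.mem_toList.1 h
  · intro e he
    exact le_pickL v M.toList e (Finset.mem_toList.2 he)

lemma measurable_sel (M : Finset (Entry m)) : Measurable (sel M) :=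
  measurable_pickL M.toList

end MenuAux

namespace MenuAux
section Basic

variable {m : ℕ} {H : ℝ} {D : Measure (Fin m → ℝ)} [IsProbabilityMeasure D]

def box (m : ℕ) (H : ℝ) : Set (Fin m → ℝ) := {v | ∀ j, v j ∈ Set.Icc (1:ℝ) H}

lemma measurableSet_box : MeasurableSet (box m H) := by
  have : box m H = ⋂ j, (fun v : Fin m → ℝ => v j) ⁻¹' Set.Icc (1:ℝ) H := by
    ext v; simp [box, Set.mem_iInter]
  rw [this]
  exact MeasurableSet.iInter fun j => (measurable_pi_apply j) measurableSet_Icc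

lemma ae_box (hsupp : D (box m H) = 1) : ∀ᵐ v ∂D, v ∈ box m H := by
  rw [MeasureTheory.ae_iff]
  have : D (box m H)ᶜ = 0 := by
    rw [measure_compl measurableSet_box (measure_ne_top D _), hsupp, measure_univ]; simp
  exact this

lemma sum_mul_le {v x : Fin m → ℝ} (hv : v ∈ box m H) (hx : IsLottery m x) (hH : 0 ≤ H) :
    ∑ j, v j * x j ≤ H := by
  calc ∑ j, v j * x j ≤ ∑ j, H * x j := by
        refine Finset.sum_le_sum fun j _ => ?_
        exact mul_le_mul_of_nonneg_right (hv j).2 (hx.1 j)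
    _ = H * ∑ j, x j := by rw [Finset.mul_sum]
    _ ≤ H * 1 := mul_le_mul_of_nonneg_left hx.2 hH
    _ = H := mul_one H

lemma price_le {M : Finset (Entry m)} {s : (Fin m → ℝ) → Entry m}
    (hM : IsMenu m M) (hs : IsSelection M s) {v : Fin m → ℝ}
    (hv : v ∈ box m H) (hH : 0 ≤ H) : (s v).2 ≤ H := by
  have h0 : utility v (0,0) ≤ utility v (s v) := (hs v).2 _ hM.1
  rw [utility_zero] at h0
  have hx : IsLottery m (s v).1 := hM.2 _ (hs v).1
  have := sum_mul_le hv hx hH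
  simp only [utility] at h0
  linarith

lemma revSel_le_H {M : Finset (Entry m)} {s : (Fin m → ℝ) → Entry m}
    (hM : IsMenu m M) (hs : IsSelection M s) (hsupp : D (box m H) = 1) (hH : 0 ≤ H) :
    revSel D s ≤ H := by
  by_cases hint : Integrable (fun v => (s v).2) D
  · rw [revSel]
    calc ∫ v, (s v).2 ∂D ≤ ∫ _v, H ∂D := by
          refine integral_mono_ae hint (integrable_const H) ?_
          filter_upwards [ae_box hsupp] with v hv
          exact price_le hM hs hv hH
      _ = H := by simp
  · rw [revSel, integral_undef hint]; exact hH

lemma bddAbove_selSet {M : Finset (Entry m)} (hM : IsMenu m M)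
    (hsupp : D (box m H) = 1) (hH : 0 ≤ H) :
    BddAbove {r | ∃ s, IsSelection M s ∧ r = revSel D s} := by
  refine ⟨H, ?_⟩
  rintro r ⟨s, hs, rfl⟩
  exact revSel_le_H hM hs hsupp hH

lemma nonempty_selSet {M : Finset (Entry m)} (hM : IsMenu m M) :
    {r | ∃ s, IsSelection M s ∧ r = revSel D s}.Nonempty :=
  ⟨revSel D (sel M), sel M, sel_isSelection hM.1, rfl⟩

lemma Rev_le_H {M : Finset (Entry m)} (hM : IsMenu m M)
    (hsupp : D (box m H) = 1) (hH : 0 ≤ H) : Rev D M ≤ H :=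
  csSup_le (nonempty_selSet hM) (by rintro r ⟨s, hs, rfl⟩; exact revSel_le_H hM hs hsupp hH)

lemma revSel_le_Rev {M : Finset (Entry m)} {s : (Fin m → ℝ) → Entry m}
    (hM : IsMenu m M) (hs : IsSelection M s) (hsupp : D (box m H) = 1) (hH : 0 ≤ H) :
    revSel D s ≤ Rev D M :=
  le_csSup (bddAbove_selSet hM hsupp hH) ⟨s, hs, rfl⟩

lemma trivialMenu_isMenu : IsMenu m ({(0,0)} : Finset (Entry m)) := by
  constructor
  · exact Finset.mem_singleton_self _
  · intro e he
    rw [Finset.mem_singleton] at he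
    subst he
    exact ⟨fun j => le_refl 0, by simp⟩

lemma nonempty_OPTSet :
    {r | ∃ M : Finset (Entry m), IsMenu m M ∧ r = Rev D M}.Nonempty :=
  ⟨_, {(0,0)}, trivialMenu_isMenu, rfl⟩

lemma bddAbove_OPTSet (hsupp : D (box m H) = 1) (hH : 0 ≤ H) :
    BddAbove {r | ∃ M : Finset (Entry m), IsMenu m M ∧ r = Rev D M} := by
  refine ⟨H, ?_⟩
  rintro r ⟨M, hM, rfl⟩
  exact Rev_le_H hM hsupp hH

lemma Rev_le_OPT {M : Finset (Entry m)} (hM : IsMenu m M)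
    (hsupp : D (box m H) = 1) (hH : 0 ≤ H) : Rev D M ≤ OPT D :=
  le_csSup (bddAbove_OPTSet hsupp hH) ⟨M, hM, rfl⟩

end Basic
end MenuAux
namespace MenuAux
section Tail

variable {m : ℕ} [NeZero m] {H : ℝ} {D : Measure (Fin m → ℝ)} [IsProbabilityMeasure D]

noncomputable def mx (v : Fin m → ℝ) : ℝ := Finset.univ.sup' Finset.univ_nonempty v

lemma le_mx (v : Fin m → ℝ) (j : Fin m) : v j ≤ mx v :=
  Finset.le_sup' v (Finset.mem_univ j)

lemma mx_le {v : Fin m → ℝ} {t : ℝ} (h : ∀ j, v j ≤ t) : mx v ≤ t :=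
  Finset.sup'_le _ _ fun j _ => h j

lemma exists_mx (v : Fin m → ℝ) : ∃ j, mx v = v j := by
  obtain ⟨j, _, hj⟩ := Finset.exists_mem_eq_sup' (Finset.univ_nonempty (α := Fin m)) v
  exact ⟨j, hj⟩

lemma measurable_mx : Measurable (mx (m := m)) := by
  have h := Finset.measurable_sup' (Finset.univ_nonempty (α := Fin m))
    (fun j (_ : j ∈ Finset.univ) => (measurable_pi_apply j : Measurable fun v : Fin m → ℝ => v j))
  convert h using 1
  funext v
  rw [mx, Finset.sup'_apply]

lemma one_le_mx {v : Fin m → ℝ} (hv : v ∈ box m H) : 1 ≤ mx v := by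
  obtain ⟨j, hj⟩ := exists_mx v
  rw [hj]; exact (hv j).1

lemma mx_le_H {v : Fin m → ℝ} (hv : v ∈ box m H) : mx v ≤ H :=
  mx_le fun j => (hv j).2

/-- single-item allocation -/
noncomputable def single (j : Fin m) : Fin m → ℝ := fun j' => if j' = j then 1 else 0

lemma single_lottery (j : Fin m) : IsLottery m (single j) := by
  constructor
  · intro j'; simp only [single]; split_ifs <;> norm_num
  · simp [single]

lemma sum_single (v : Fin m → ℝ) (j : Fin m) : ∑ j', v j' * single j j' = v j := by
  simp only [single, mul_ite, mul_one, mul_zero]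
  exact Finset.sum_ite_eq' Finset.univ j v |>.trans (by simp)

open scoped Classical in
/-- the menu posting price `t` on every item -/
noncomputable def tailMenu (t : ℝ) : Finset (Entry m) :=
  insert (0,0) (Finset.univ.image fun j : Fin m => (single j, t))

lemma tailMenu_isMenu (t : ℝ) : IsMenu m (tailMenu (m := m) t) := by
  constructor
  · exact Finset.mem_insert_self _ _
  · intro e he
    rcases Finset.mem_insert.1 he with rfl | he
    · exact ⟨fun j => le_refl 0, by simp⟩
    · obtain ⟨j, _, rfl⟩ := Finset.mem_image.1 he
      exact single_lottery j

noncomputable def tailSel (t : ℝ) : (Fin m → ℝ) → Entry m :=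
  fun v => if t < mx v then ((single (exists_mx v).choose), t) else (0,0)

lemma tailSel_isSelection (t : ℝ) : IsSelection (tailMenu (m := m) t) (tailSel (m := m) t) := by
  intro v
  constructor
  · rw [tailSel]
    split_ifs with h
    · exact Finset.mem_insert_of_mem (Finset.mem_image.2 ⟨_, Finset.mem_univ _, rfl⟩)
    · exact Finset.mem_insert_self _ _
  · intro e he
    have hspec := (exists_mx v).choose_spec
    rw [tailSel]
    split_ifs with h
    · rcases Finset.mem_insert.1 he with rfl | he
      · rw [utility_zero]
        simp only [utility, sum_single]
        rw [← hspec]; linarith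
      · obtain ⟨j, _, rfl⟩ := Finset.mem_image.1 he
        simp only [utility, sum_single]
        have := le_mx v j
        rw [← hspec]; linarith
    · rcases Finset.mem_insert.1 he with rfl | he
      · exact le_refl _
      · obtain ⟨j, _, rfl⟩ := Finset.mem_image.1 he
        rw [utility_zero]
        simp only [utility, sum_single]
        have h1 := le_mx v j
        have h2 := le_of_not_gt h
        linarith

lemma tailSel_price (t : ℝ) (v : Fin m → ℝ) :
    (tailSel (m := m) t v).2 = if t < mx v then t else 0 := by
  rw [tailSel]; split_ifs <;> rfl

lemma measurableSet_mxgt (t : ℝ) : MeasurableSet {v : Fin m → ℝ | t < mx v} :=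
  measurableSet_lt measurable_const measurable_mx

lemma tail_bound (t : ℝ) (ht : 0 ≤ t)
    (hsupp : D (box m H) = 1) (hH : 0 ≤ H) :
    t * (D {v | t < mx v}).toReal ≤ OPT D := by
  have hmeas : MeasurableSet {v : Fin m → ℝ | t < mx v} := measurableSet_mxgt t
  have hcalc : revSel D (tailSel (m := m) t) = t * (D {v | t < mx v}).toReal := by
    rw [revSel]
    have : (fun v => (tailSel (m := m) t v).2)
        = fun v => ({v : Fin m → ℝ | t < mx v}).indicator (fun _ => t) v := by
      funext v
      rw [tailSel_price, Set.indicator_apply]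
      simp [Set.mem_setOf_eq]
    rw [this, integral_indicator_const t hmeas]
    rw [smul_eq_mul, measureReal_def]; ring
  rw [← hcalc]
  exact le_trans
    (revSel_le_Rev (tailMenu_isMenu t) (tailSel_isSelection t) hsupp hH)
    (Rev_le_OPT (tailMenu_isMenu t) hsupp hH)

end Tail
end MenuAux
namespace MenuAux
section OptOne

variable {m : ℕ} [NeZero m] {H : ℝ} {D : Measure (Fin m → ℝ)} [IsProbabilityMeasure D]

open scoped Classical in
noncomputable def oneMenu (m : ℕ) [NeZero m] : Finset (Entry m) :=
  insert (0,0) {((single 0 : Fin m → ℝ), (1:ℝ))}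

lemma oneMenu_isMenu : IsMenu m (oneMenu m) := by
  constructor
  · exact Finset.mem_insert_self _ _
  · intro e he
    rcases Finset.mem_insert.1 he with rfl | he
    · exact ⟨fun j => le_refl 0, by simp⟩
    · rw [Finset.mem_singleton] at he; subst he
      exact single_lottery 0

noncomputable def oneSel (m : ℕ) [NeZero m] : (Fin m → ℝ) → Entry m :=
  fun v => if 1 ≤ v 0 then ((single 0 : Fin m → ℝ), (1:ℝ)) else (0,0)

lemma oneSel_isSelection : IsSelection (oneMenu m) (oneSel m) := by
  intro v
  constructor
  · rw [oneSel]; split_ifs with h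
    · exact Finset.mem_insert_of_mem (Finset.mem_singleton_self _)
    · exact Finset.mem_insert_self _ _
  · intro e he
    rw [oneSel]
    split_ifs with h
    · rcases Finset.mem_insert.1 he with rfl | he
      · rw [utility_zero]; simp only [utility, sum_single]; linarith
      · rw [Finset.mem_singleton] at he; subst he; exact le_refl _
    · rcases Finset.mem_insert.1 he with rfl | he
      · exact le_refl _
      · rw [Finset.mem_singleton] at he; subst he
        rw [utility_zero]; simp only [utility, sum_single]; linarith [lt_of_not_ge h]

lemma one_le_OPT (hsupp : D (box m H) = 1) (hH : 1 ≤ H) : 1 ≤ OPT D := by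
  have hmeas : MeasurableSet {v : Fin m → ℝ | 1 ≤ v 0} :=
    measurableSet_le measurable_const (measurable_pi_apply 0)
  have hsub : box m H ⊆ {v : Fin m → ℝ | 1 ≤ v 0} := fun v hv => (hv 0).1
  have hDset : D {v : Fin m → ℝ | 1 ≤ v 0} = 1 :=
    le_antisymm prob_le_one (hsupp ▸ measure_mono hsub)
  have hcalc : revSel D (oneSel m) = 1 := by
    rw [revSel]
    have : (fun v => (oneSel m v).2)
        = fun v => ({v : Fin m → ℝ | 1 ≤ v 0}).indicator (fun _ => (1:ℝ)) v := by
      funext v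
      by_cases h : 1 ≤ v 0
      · rw [oneSel, if_pos h,
          Set.indicator_of_mem (show v ∈ {v : Fin m → ℝ | 1 ≤ v 0} from h) (fun _ => (1:ℝ))]
      · rw [oneSel, if_neg h,
          Set.indicator_of_notMem (show v ∉ {v : Fin m → ℝ | 1 ≤ v 0} from h) (fun _ => (1:ℝ))]
    rw [this, integral_indicator_const (1:ℝ) hmeas, measureReal_def, hDset]
    simp
  calc (1:ℝ) = revSel D (oneSel m) := hcalc.symm
    _ ≤ Rev D (oneMenu m) := revSel_le_Rev oneMenu_isMenu oneSel_isSelection hsupp (by linarith)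
    _ ≤ OPT D := Rev_le_OPT oneMenu_isMenu hsupp (by linarith)

lemma one_le_logb {H : ℝ} (hH : 2 ≤ H) : 1 ≤ Real.logb 2 H := by
  have := Real.logb_le_logb_of_le (one_lt_two) (by norm_num : (0:ℝ) < 2) hH
  rwa [Real.logb_self_eq_one one_lt_two] at this

lemma geom_sum_Icc (K : ℕ) (hK : 1 ≤ K) :
    ∑ k ∈ Finset.Icc 1 K, (2:ℝ)^(k+1) = 2^(K+2) - 4 := by
  induction K, hK using Nat.le_induction with
  | base => norm_num
  | succ K hK ih =>
    rw [Finset.sum_Icc_succ_top (by omega : 1 ≤ K + 1), ih]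
    ring

lemma integrable_mx (hsupp : D (box m H) = 1) (hH : 0 ≤ H) :
    Integrable (mx (m := m)) D := by
  refine Integrable.mono' (integrable_const H) measurable_mx.aestronglyMeasurable ?_
  filter_upwards [ae_box hsupp] with v hv
  rw [Real.norm_eq_abs, abs_of_nonneg (by linarith [one_le_mx (H := H) hv])]
  exact mx_le_H hv

lemma integral_mx_le (hsupp : D (box m H) = 1) (hH : 2 ≤ H) :
    ∫ v, mx v ∂D ≤ 8 * Real.logb 2 H * OPT D := by
  classical
  set L := Real.logb 2 H with hLdef
  have hL1 : 1 ≤ L := one_le_logb hH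
  have hOPT : 1 ≤ OPT D := one_le_OPT hsupp (by linarith)
  set N : ℕ := ⌊L⌋₊ + 1 with hNdef
  have hN1 : 1 ≤ N := by omega
  have hNL : (N : ℝ) ≤ 2 * L := by
    have h1 : (⌊L⌋₊ : ℝ) ≤ L := Nat.floor_le (by linarith)
    have : (N : ℝ) = (⌊L⌋₊ : ℝ) + 1 := by exact_mod_cast rfl
    rw [this]; linarith
  have hHN : H < 2^N := by
    have h1 : L < N := by
      have := Nat.lt_floor_add_one L
      exact_mod_cast this
    have h2 : H < (2:ℝ) ^ (N:ℝ) := by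
      calc H = (2:ℝ) ^ L := by
            rw [hLdef, Real.rpow_logb (by norm_num) (by norm_num) (by linarith)]
        _ < (2:ℝ) ^ (N:ℝ) := Real.rpow_lt_rpow_of_exponent_lt one_lt_two h1
    rwa [Real.rpow_natCast] at h2
  -- the layering sets
  set S : ℕ → Set (Fin m → ℝ) := fun k => {v | (2:ℝ)^k ≤ mx v} with hSdef
  have hSmeas : ∀ k, MeasurableSet (S k) := fun k =>
    measurableSet_le measurable_const measurable_mx
  set g : (Fin m → ℝ) → ℝ :=
    fun v => 2 + ∑ k ∈ Finset.Icc 1 (N-1), (S k).indicator (fun _ => (2:ℝ)^(k+1)) v with hgdef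
  have hpoint : ∀ v ∈ box m H, mx v ≤ g v := by
    intro v hv
    have hmx1 : 1 ≤ mx v := one_le_mx hv
    have hmxH : mx v ≤ H := mx_le_H hv
    set K : ℕ := ⌊Real.logb 2 (mx v)⌋₊ with hKdef
    have hlogmx : 0 ≤ Real.logb 2 (mx v) := Real.logb_nonneg one_lt_two hmx1
    have h2K : (2:ℝ)^K ≤ mx v := by
      have h1 : (K : ℝ) ≤ Real.logb 2 (mx v) := Nat.floor_le hlogmx
      have h2 : (2:ℝ) ^ (K:ℝ) ≤ (2:ℝ) ^ Real.logb 2 (mx v) :=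
        Real.rpow_le_rpow_of_exponent_le one_le_two h1
      rwa [Real.rpow_logb (by norm_num) (by norm_num) (by linarith), Real.rpow_natCast] at h2
    have h2K1 : mx v < (2:ℝ)^(K+1) := by
      have h1 : Real.logb 2 (mx v) < (K:ℝ) + 1 := Nat.lt_floor_add_one _
      have h2 : (2:ℝ) ^ Real.logb 2 (mx v) < (2:ℝ) ^ ((K:ℝ)+1) :=
        Real.rpow_lt_rpow_of_exponent_lt one_lt_two h1
      rw [Real.rpow_logb (by norm_num) (by norm_num) (by linarith)] at h2
      have : ((K:ℝ)+1) = ((K+1 : ℕ) : ℝ) := by push_cast; ring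
      rwa [this, Real.rpow_natCast] at h2
    have hKN : K ≤ N - 1 := by
      have : (2:ℝ)^K < (2:ℝ)^N := lt_of_le_of_lt (le_trans h2K hmxH) hHN
      have hKltN : K < N := by
        by_contra hcon
        push_neg at hcon
        exact absurd this (not_lt.2 (pow_le_pow_right₀ one_le_two hcon))
      omega
    have hnonneg : ∀ k ∈ Finset.Icc 1 (N-1),
        0 ≤ (S k).indicator (fun _ => (2:ℝ)^(k+1)) v := by
      intro k _
      exact Set.indicator_nonneg (fun _ _ => by positivity) v
    rcases Nat.eq_zero_or_pos K with hK0 | hKpos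
    · rw [hK0] at h2K1
      norm_num at h2K1
      have : 0 ≤ ∑ k ∈ Finset.Icc 1 (N-1), (S k).indicator (fun _ => (2:ℝ)^(k+1)) v :=
        Finset.sum_nonneg hnonneg
      rw [hgdef]; dsimp only; linarith
    · have hind : ∀ k ∈ Finset.Icc 1 K, (S k).indicator (fun _ => (2:ℝ)^(k+1)) v = (2:ℝ)^(k+1) := by
        intro k hk
        rw [Set.indicator_of_mem]
        rw [hSdef]
        simp only [Set.mem_setOf_eq]
        calc (2:ℝ)^k ≤ (2:ℝ)^K := pow_le_pow_right₀ one_le_two (Finset.mem_Icc.1 hk).2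
          _ ≤ mx v := h2K
      have hsum : ∑ k ∈ Finset.Icc 1 K, (S k).indicator (fun _ => (2:ℝ)^(k+1)) v
          = 2^(K+2) - 4 := by
        rw [Finset.sum_congr rfl hind, geom_sum_Icc K hKpos]
      have hsub : Finset.Icc 1 K ⊆ Finset.Icc 1 (N-1) := by
        apply Finset.Icc_subset_Icc_right hKN
      have hle : ∑ k ∈ Finset.Icc 1 K, (S k).indicator (fun _ => (2:ℝ)^(k+1)) v
          ≤ ∑ k ∈ Finset.Icc 1 (N-1), (S k).indicator (fun _ => (2:ℝ)^(k+1)) v := by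
        apply Finset.sum_le_sum_of_subset_of_nonneg hsub
        intro k hk _
        exact Set.indicator_nonneg (fun _ _ => by positivity) v
      have h4 : (2:ℝ)^(K+1) ≤ 2^(K+2) - 4 + 2 := by
        have : (2:ℝ)^(K+2) = 2 * 2^(K+1) := by ring
        have h2 : (2:ℝ) ≤ 2^(K+1) := by
          calc (2:ℝ) = 2^1 := (pow_one 2).symm
            _ ≤ 2^(K+1) := pow_le_pow_right₀ one_le_two (by omega)
        linarith
      rw [hgdef]; dsimp only
      linarith [hsum ▸ hle]
  -- integrate
  have hint_ind : ∀ k, Integrable ((S k).indicator (fun _ => (2:ℝ)^(k+1))) D := by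
    intro k
    exact (integrable_const _).indicator (hSmeas k)
  have hint_g : Integrable g D := by
    rw [hgdef]
    exact (integrable_const 2).add (MeasureTheory.integrable_finset_sum _ (fun k _ => hint_ind k))
  have hmono : ∫ v, mx v ∂D ≤ ∫ v, g v ∂D := by
    refine integral_mono_ae (integrable_mx hsupp (by linarith)) hint_g ?_
    filter_upwards [ae_box hsupp] with v hv
    exact hpoint v hv
  have hgval : ∫ v, g v ∂D
      = 2 + ∑ k ∈ Finset.Icc 1 (N-1), (2:ℝ)^(k+1) * (D (S k)).toReal := by
    rw [hgdef]
    rw [integral_add (integrable_const 2) (MeasureTheory.integrable_finset_sum _ (fun k _ => hint_ind k))]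
    rw [MeasureTheory.integral_finset_sum _ (fun k _ => hint_ind k)]
    have hconst : ∫ (_v : Fin m → ℝ), (2:ℝ) ∂D = 2 := by simp
    rw [hconst]
    congr 1
    refine Finset.sum_congr rfl fun k _ => ?_
    rw [integral_indicator_const _ (hSmeas k), smul_eq_mul, mul_comm, measureReal_def]
  have hterm : ∀ k ∈ Finset.Icc 1 (N-1), (2:ℝ)^(k+1) * (D (S k)).toReal ≤ 4 * OPT D := by
    intro k hk
    have hk1 : 1 ≤ k := (Finset.mem_Icc.1 hk).1
    have hsub : S k ⊆ {v : Fin m → ℝ | (2:ℝ)^(k-1) < mx v} := by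
      intro v hv
      simp only [hSdef, Set.mem_setOf_eq] at hv ⊢
      calc (2:ℝ)^(k-1) < (2:ℝ)^k := by
            apply pow_lt_pow_right₀ one_lt_two
            omega
        _ ≤ mx v := hv
    have hmeas2 : (D (S k)).toReal ≤ (D {v : Fin m → ℝ | (2:ℝ)^(k-1) < mx v}).toReal :=
      ENNReal.toReal_mono (measure_ne_top D _) (measure_mono hsub)
    have htail := tail_bound (D := D) (H := H) ((2:ℝ)^(k-1)) (by positivity) hsupp (by linarith)
    have hkpow : (2:ℝ)^(k+1) = 4 * (2:ℝ)^(k-1) := by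
      have : k + 1 = (k-1) + 2 := by omega
      rw [this, pow_add]; ring
    rw [hkpow]
    calc 4 * (2:ℝ)^(k-1) * (D (S k)).toReal
        ≤ 4 * ((2:ℝ)^(k-1) * (D {v : Fin m → ℝ | (2:ℝ)^(k-1) < mx v}).toReal) := by
          have h1 : (0:ℝ) ≤ (2:ℝ)^(k-1) := by positivity
          nlinarith [ENNReal.toReal_nonneg (a := D (S k))]
      _ ≤ 4 * OPT D := by linarith
  have hsum_le : ∑ k ∈ Finset.Icc 1 (N-1), (2:ℝ)^(k+1) * (D (S k)).toReal
      ≤ (N - 1 : ℕ) * (4 * OPT D) := by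
    have := Finset.sum_le_card_nsmul (Finset.Icc 1 (N-1)) _ (4 * OPT D) hterm
    rwa [Nat.card_Icc, nsmul_eq_mul] at this
  have hNcast : ((N - 1 : ℕ) : ℝ) ≤ (N : ℝ) - 1 + 1 := by
    push_cast [Nat.cast_sub hN1]
    simp
  have hfinal : ((N - 1 + 1 - 1 : ℕ) : ℝ) = ((N-1 : ℕ):ℝ) := by norm_num
  calc ∫ v, mx v ∂D ≤ ∫ v, g v ∂D := hmono
    _ = 2 + ∑ k ∈ Finset.Icc 1 (N-1), (2:ℝ)^(k+1) * (D (S k)).toReal := hgval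
    _ ≤ 2 + (N - 1 : ℕ) * (4 * OPT D) := by linarith
    _ ≤ 8 * L * OPT D := by
        have h1 : ((N - 1 : ℕ) : ℝ) ≤ 2*L - 1 := by
          have : ((N - 1 : ℕ) : ℝ) = (N:ℝ) - 1 := by
            push_cast [Nat.cast_sub hN1]; ring
          rw [this]; linarith
        have h2 : (0:ℝ) ≤ ((N - 1 : ℕ) : ℝ) := Nat.cast_nonneg _
        nlinarith

end OptOne
end MenuAux
namespace MenuAux
section Round

noncomputable def rd (F : Finset ℝ) (y : ℝ) : ℝ :=
  if h : (F.filter (fun z => z ≤ y)).Nonempty then (F.filter (fun z => z ≤ y)).max' h else 0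

lemma rd_mem {F : Finset ℝ} (h0 : (0:ℝ) ∈ F) (y : ℝ) : rd F y ∈ F := by
  rw [rd]
  split_ifs with h
  · exact (Finset.mem_filter.1 ((F.filter (fun z => z ≤ y)).max'_mem h)).1
  · exact h0

lemma rd_le {F : Finset ℝ} (h0 : (0:ℝ) ∈ F) {y : ℝ} (hy : 0 ≤ y) : rd F y ≤ y := by
  have hne : (F.filter (fun z => z ≤ y)).Nonempty := ⟨0, Finset.mem_filter.2 ⟨h0, hy⟩⟩
  rw [rd, dif_pos hne]
  exact (Finset.mem_filter.1 ((F.filter (fun z => z ≤ y)).max'_mem hne)).2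

lemma le_rd {F : Finset ℝ} {y z : ℝ} (hz : z ∈ F) (hzy : z ≤ y) : z ≤ rd F y := by
  have hmem : z ∈ F.filter (fun w => w ≤ y) := Finset.mem_filter.2 ⟨hz, hzy⟩
  have hne : (F.filter (fun w => w ≤ y)).Nonempty := ⟨z, hmem⟩
  rw [rd, dif_pos hne]
  exact Finset.le_max' _ z hmem

lemma rd_nonneg {F : Finset ℝ} (h0 : (0:ℝ) ∈ F) {y : ℝ} (hy : 0 ≤ y) : 0 ≤ rd F y :=
  le_rd h0 hy

noncomputable def VaF (τ : ℝ) (Ka : ℕ) : Finset ℝ :=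
  insert 0 ((Finset.range (Ka+1)).image fun k => ((1+τ)⁻¹ : ℝ)^k)

noncomputable def VpF (τ : ℝ) (Kp : ℕ) : Finset ℝ :=
  insert 0 ((Finset.range (Kp+1)).image fun k => τ*(1+τ)^k)

lemma zero_mem_VaF (τ : ℝ) (Ka : ℕ) : (0:ℝ) ∈ VaF τ Ka := Finset.mem_insert_self _ _
lemma zero_mem_VpF (τ : ℝ) (Kp : ℕ) : (0:ℝ) ∈ VpF τ Kp := Finset.mem_insert_self _ _

lemma card_VaF (τ : ℝ) (Ka : ℕ) : (VaF τ Ka).card ≤ Ka + 2 := by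
  calc (VaF τ Ka).card ≤ ((Finset.range (Ka+1)).image fun k => ((1+τ)⁻¹ : ℝ)^k).card + 1 :=
        Finset.card_insert_le _ _
    _ ≤ (Finset.range (Ka+1)).card + 1 := by
        have := Finset.card_image_le (s := Finset.range (Ka+1)) (f := fun k => ((1+τ)⁻¹ : ℝ)^k)
        omega
    _ = Ka + 2 := by rw [Finset.card_range]

lemma card_VpF (τ : ℝ) (Kp : ℕ) : (VpF τ Kp).card ≤ Kp + 2 := by
  calc (VpF τ Kp).card ≤ ((Finset.range (Kp+1)).image fun k => τ*(1+τ)^k).card + 1 :=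
        Finset.card_insert_le _ _
    _ ≤ (Finset.range (Kp+1)).card + 1 := by
        have := Finset.card_image_le (s := Finset.range (Kp+1)) (f := fun k => τ*(1+τ)^k)
        omega
    _ = Kp + 2 := by rw [Finset.card_range]

/-- lower bound for allocation rounding, per coordinate -/
lemma alloc_coord {τ H : ℝ} {mm Ka : ℕ} (hτ0 : 0 < τ) (hτ1 : τ ≤ 1) (hH : 0 < H)
    (hmm : 0 < mm) (hKa : ((1+τ)⁻¹)^Ka ≤ τ/(mm*H))
    {w x : ℝ} (hw0 : 0 ≤ w) (hwH : w ≤ H) (hx0 : 0 ≤ x) (hx1 : x ≤ 1) :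
    (1-τ)*(w*x) - τ/mm ≤ w * rd (VaF τ Ka) x := by
  have hA1 : (1:ℝ) < 1 + τ := by linarith
  have hA0 : (0:ℝ) < 1 + τ := by linarith
  by_cases hcase : ((1+τ)⁻¹)^Ka ≤ x
  · -- x is above the grid floor
    have hx0' : 0 < x := lt_of_lt_of_le (by positivity) hcase
    have hxinv1 : 1 ≤ x⁻¹ := by
      rw [le_inv_comm₀] <;> simp_all
    set k : ℕ := ⌈Real.logb (1+τ) x⁻¹⌉₊ with hkdef
    have hlog_nonneg : 0 ≤ Real.logb (1+τ) x⁻¹ := Real.logb_nonneg hA1 hxinv1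
    have hkKa : k ≤ Ka := by
      have h1 : Real.logb (1+τ) x⁻¹ ≤ (Ka : ℝ) := by
        have h2 : x⁻¹ ≤ (1+τ)^Ka := by
          rw [inv_pow] at hcase
          calc x⁻¹ ≤ (((1+τ)^Ka)⁻¹)⁻¹ := inv_anti₀ (by positivity) hcase
            _ = (1+τ)^Ka := inv_inv _
        have h3 := Real.logb_le_logb_of_le hA1 (by positivity : (0:ℝ) < x⁻¹) h2
        rwa [show ((1+τ):ℝ)^Ka = ((1+τ):ℝ)^(Ka:ℝ) by rw [Real.rpow_natCast],
          Real.logb_rpow hA0 (by linarith)] at h3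
      exact Nat.ceil_le.2 h1
    have hgrid : ((1+τ)⁻¹)^k ∈ VaF τ Ka :=
      Finset.mem_insert_of_mem (Finset.mem_image.2 ⟨k, Finset.mem_range.2 (by omega), rfl⟩)
    have hgk_le : ((1+τ)⁻¹)^k ≤ x := by
      have h1 : Real.logb (1+τ) x⁻¹ ≤ (k:ℝ) := Nat.le_ceil _
      have h2 : x⁻¹ ≤ (1+τ)^(k:ℝ) := by
        calc x⁻¹ = (1+τ) ^ Real.logb (1+τ) x⁻¹ :=
              (Real.rpow_logb hA0 (by linarith) (by positivity)).symm
          _ ≤ (1+τ)^(k:ℝ) := Real.rpow_le_rpow_of_exponent_le (le_of_lt hA1) h1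
      rw [Real.rpow_natCast] at h2
      rw [inv_pow]
      calc ((1+τ)^k)⁻¹ ≤ (x⁻¹)⁻¹ := by
            apply inv_anti₀ (by positivity) h2
        _ = x := inv_inv x
    have hgk_ge : x/(1+τ) ≤ ((1+τ)⁻¹)^k := by
      have h1 : (k:ℝ) < Real.logb (1+τ) x⁻¹ + 1 := Nat.ceil_lt_add_one hlog_nonneg
      have h2 : (1+τ)^(k:ℝ) ≤ (1+τ)^(Real.logb (1+τ) x⁻¹ + 1) :=
        Real.rpow_le_rpow_of_exponent_le (le_of_lt hA1) (le_of_lt h1)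
      rw [Real.rpow_add hA0, Real.rpow_logb hA0 (by linarith) (by positivity),
        Real.rpow_one, Real.rpow_natCast] at h2
      rw [inv_pow]
      rw [div_le_iff₀ hA0]
      calc x = (x⁻¹)⁻¹ := (inv_inv x).symm
        _ ≤ ((1+τ)^k / (1+τ))⁻¹ := by
            apply inv_anti₀
            · positivity
            · rw [div_le_iff₀ hA0]; linarith [h2]
        _ = ((1+τ)^k)⁻¹ * (1+τ) := by field_simp
    have hrd : x/(1+τ) ≤ rd (VaF τ Ka) x := le_trans hgk_ge (le_rd hgrid hgk_le)
    have h5 : (1-τ)*x ≤ x/(1+τ) := by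
      rw [le_div_iff₀ hA0]
      nlinarith [mul_nonneg (mul_self_nonneg τ) hx0]
    have h6 : w * ((1-τ)*x) ≤ w * rd (VaF τ Ka) x :=
      mul_le_mul_of_nonneg_left (le_trans h5 hrd) hw0
    have h7 : 0 < τ/mm := by positivity
    nlinarith
  · -- x is tiny
    push_neg at hcase
    have h1 : 0 ≤ w * rd (VaF τ Ka) x :=
      mul_nonneg hw0 (rd_nonneg (zero_mem_VaF τ Ka) hx0)
    have h2 : w * x ≤ H * x := mul_le_mul_of_nonneg_right hwH hx0
    have h3 : H * x < H * ((1+τ)⁻¹)^Ka := by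
      apply mul_lt_mul_of_pos_left hcase hH
    have h4 : H * ((1+τ)⁻¹)^Ka ≤ H * (τ/(mm*H)) := mul_le_mul_of_nonneg_left hKa (le_of_lt hH)
    have h5 : H * (τ/(mm*H)) = τ/mm := by
      field_simp
    have h6 : (1-τ)*(w*x) ≤ w*x := by nlinarith [mul_nonneg hw0 hx0]
    nlinarith

/-- lower bound for price rounding -/
lemma price_round {τ H : ℝ} {Kp : ℕ} (hτ0 : 0 < τ) (hτ1 : τ ≤ 1) (hH : 0 < H)
    (hKp : H/τ ≤ (1+τ)^Kp) {y : ℝ} (hy0 : 0 ≤ y) (hyH : y ≤ H) :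
    y - τ*y - τ ≤ rd (VpF τ Kp) y := by
  have hA1 : (1:ℝ) < 1 + τ := by linarith
  have hA0 : (0:ℝ) < 1 + τ := by linarith
  by_cases hcase : τ ≤ y
  · have hyτ : 1 ≤ y/τ := by rw [le_div_iff₀ hτ0]; linarith
    set k : ℕ := ⌊Real.logb (1+τ) (y/τ)⌋₊ with hkdef
    have hlog_nonneg : 0 ≤ Real.logb (1+τ) (y/τ) := Real.logb_nonneg hA1 hyτ
    have hkKp : k ≤ Kp := by
      have h1 : Real.logb (1+τ) (y/τ) ≤ (Kp:ℝ) := by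
        have h2 : y/τ ≤ (1+τ)^Kp := by
          refine le_trans ?_ hKp
          gcongr
        have h3 := Real.logb_le_logb_of_le hA1 (by positivity : (0:ℝ) < y/τ) h2
        rwa [show ((1+τ):ℝ)^Kp = ((1+τ):ℝ)^(Kp:ℝ) by rw [Real.rpow_natCast],
          Real.logb_rpow hA0 (by linarith)] at h3
      have h4 := Nat.floor_le_floor (R := ℝ) h1
      rwa [Nat.floor_natCast] at h4
    have hgrid : τ*(1+τ)^k ∈ VpF τ Kp :=
      Finset.mem_insert_of_mem (Finset.mem_image.2 ⟨k, Finset.mem_range.2 (by omega), rfl⟩)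
    have hgk_le : τ*(1+τ)^k ≤ y := by
      have h1 : (k:ℝ) ≤ Real.logb (1+τ) (y/τ) := Nat.floor_le hlog_nonneg
      have h2 : (1+τ)^(k:ℝ) ≤ (1+τ)^(Real.logb (1+τ) (y/τ)) :=
        Real.rpow_le_rpow_of_exponent_le (le_of_lt hA1) h1
      rw [Real.rpow_logb hA0 (by linarith) (by positivity), Real.rpow_natCast] at h2
      calc τ*(1+τ)^k ≤ τ*(y/τ) := mul_le_mul_of_nonneg_left h2 (le_of_lt hτ0)
        _ = y := by field_simp
    have hgk_ge : y/(1+τ) ≤ τ*(1+τ)^k := by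
      have h1 : Real.logb (1+τ) (y/τ) - 1 < (k:ℝ) := by
        have := Nat.sub_one_lt_floor (Real.logb (1+τ) (y/τ))
        exact_mod_cast this
      have h2 : (1+τ)^(Real.logb (1+τ) (y/τ) - 1) ≤ (1+τ)^(k:ℝ) :=
        Real.rpow_le_rpow_of_exponent_le (le_of_lt hA1) (le_of_lt h1)
      rw [Real.rpow_sub hA0, Real.rpow_logb hA0 (by linarith) (by positivity),
        Real.rpow_one, Real.rpow_natCast] at h2
      calc y/(1+τ) = τ * ((y/τ)/(1+τ)) := by field_simp
        _ ≤ τ * (1+τ)^k := mul_le_mul_of_nonneg_left h2 (le_of_lt hτ0)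
    have hrd : y/(1+τ) ≤ rd (VpF τ Kp) y := le_trans hgk_ge (le_rd hgrid hgk_le)
    have h5 : y - τ*y ≤ y/(1+τ) := by
      rw [le_div_iff₀ hA0]
      nlinarith [mul_nonneg (mul_self_nonneg τ) hy0]
    linarith
  · push_neg at hcase
    have h1 : 0 ≤ rd (VpF τ Kp) y := rd_nonneg (zero_mem_VpF τ Kp) hy0
    nlinarith

/-- the rounding map on entries -/
noncomputable def phi {m : ℕ} (H η τ : ℝ) (Ka Kp : ℕ) (e : Entry m) : Entry m :=
  if 0 ≤ e.2 ∧ e.2 ≤ H then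
    ((fun j => rd (VaF τ Ka) (e.1 j)), rd (VpF τ Kp) ((1-η)*e.2))
  else (0,0)

lemma phi_price_nonneg {m : ℕ} (H η τ : ℝ) (Ka Kp : ℕ) (hη : η ≤ 1) (e : Entry m) :
    0 ≤ (phi H η τ Ka Kp e).2 := by
  rw [phi]
  split_ifs with h
  · exact rd_nonneg (zero_mem_VpF τ Kp) (by nlinarith [h.1])
  · exact le_refl 0

lemma phi_price_le {m : ℕ} (H η τ : ℝ) (Ka Kp : ℕ) (hη0 : 0 ≤ η) (hη : η ≤ 1) (hH : 0 ≤ H)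
    (e : Entry m) : (phi H η τ Ka Kp e).2 ≤ H := by
  rw [phi]
  split_ifs with h
  · calc rd (VpF τ Kp) ((1-η)*e.2) ≤ (1-η)*e.2 :=
        rd_le (zero_mem_VpF τ Kp) (by nlinarith [h.1])
      _ ≤ H := by nlinarith [h.1, h.2]
  · exact hH

lemma phi_lottery {m : ℕ} (H η τ : ℝ) (Ka Kp : ℕ) {e : Entry m} (he : IsLottery m e.1) :
    IsLottery m (phi H η τ Ka Kp e).1 := by
  rw [phi]
  split_ifs with h
  · constructor
    · intro j
      exact rd_nonneg (zero_mem_VaF τ Ka) (he.1 j)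
    · calc ∑ j, rd (VaF τ Ka) (e.1 j) ≤ ∑ j, e.1 j :=
          Finset.sum_le_sum fun j _ => rd_le (zero_mem_VaF τ Ka) (he.1 j)
        _ ≤ 1 := he.2
  · exact ⟨fun j => le_refl 0, by simp⟩

end Round
end MenuAux
namespace MenuAux
section Key

variable {m : ℕ} [NeZero m]

set_option maxHeartbeats 1000000 in
lemma key_pointwise {H η τ : ℝ} {Ka Kp : ℕ} (hH : 1 ≤ H)
    (hη0 : 0 < η) (hη1 : η ≤ 1/16) (hτ0 : 0 < τ) (hτη : 2*τ ≤ η^2)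
    (hKa : ((1+τ)⁻¹:ℝ)^Ka ≤ τ/(m*H)) (hKp : H/τ ≤ (1+τ)^Kp)
    {M : Finset (Entry m)} (hM : IsMenu m M)
    {s : (Fin m → ℝ) → Entry m} (hs : IsSelection M s)
    {M' : Finset (Entry m)} (hM' : M' = insert (0,0) (M.image (phi H η τ Ka Kp)))
    {s' : (Fin m → ℝ) → Entry m} (hs' : IsSelection M' s')
    {v : Fin m → ℝ} (hv : v ∈ box m H) :
    (1-4*η)*(s v).2 - (τ/η)*(mx v) - 4*τ/η ≤ (s' v).2 := by
  have hm0 : 0 < m := Nat.pos_of_ne_zero (NeZero.ne m)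
  have hmR : (0:ℝ) < (m:ℝ) := by exact_mod_cast hm0
  have hH0 : (0:ℝ) < H := by linarith
  have hτ1 : τ ≤ 1 := by nlinarith [hτη, sq_nonneg η]
  have hτη' : τ ≤ η/2 := by nlinarith [hτη, sq_nonneg η]
  have hη16 : η ≤ 1 := by linarith
  -- prices in M' are in [0,H]
  have hM'price : ∀ e' ∈ M', 0 ≤ e'.2 ∧ e'.2 ≤ H := by
    intro e' he'
    rw [hM'] at he'
    rcases Finset.mem_insert.1 he' with rfl | he'
    · exact ⟨le_refl 0, by simpa using hH0.le⟩
    · obtain ⟨f, _, rfl⟩ := Finset.mem_image.1 he'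
      exact ⟨phi_price_nonneg H η τ Ka Kp hη16 f,
        phi_price_le H η τ Ka Kp hη0.le hη16 (by linarith) f⟩
  have hp'0 : 0 ≤ (s' v).2 := (hM'price _ (hs' v).1).1
  -- basic facts about the chosen entry of M
  have hlott : IsLottery m (s v).1 := hM.2 _ (hs v).1
  set p := (s v).2 with hpdef
  set X := ∑ j, v j * (s v).1 j with hXdef
  have hu0 : 0 ≤ X - p := by
    have h := (hs v).2 (0,0) hM.1
    rw [utility_zero] at h
    simp only [utility] at h
    linarith
  have hXH : X ≤ H := sum_mul_le hv hlott (by linarith)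
  have hX0 : 0 ≤ X := by
    apply Finset.sum_nonneg
    intro j _
    exact mul_nonneg (by linarith [(hv j).1]) (hlott.1 j)
  have hXmx : X ≤ mx v := by
    have hmx0 : 0 ≤ mx v := by linarith [one_le_mx (H := H) hv]
    calc X ≤ ∑ j, mx v * (s v).1 j := by
          refine Finset.sum_le_sum fun j _ => ?_
          exact mul_le_mul_of_nonneg_right (le_mx v j) (hlott.1 j)
      _ = mx v * ∑ j, (s v).1 j := by rw [Finset.mul_sum]
      _ ≤ mx v * 1 := mul_le_mul_of_nonneg_left hlott.2 hmx0
      _ = mx v := mul_one _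
  -- reduce to the X-version
  suffices hkey : (1-4*η)*p - (τ/η)*X - 4*τ/η ≤ (s' v).2 by
    have h1 : (τ/η)*X ≤ (τ/η)*(mx v) :=
      mul_le_mul_of_nonneg_left hXmx (by positivity)
    linarith
  -- reduce to the η-scaled version
  suffices hkey2 : η*((1-4*η)*p) - τ*X - 4*τ ≤ η*(s' v).2 by
    rw [show (1-4*η)*p - (τ/η)*X - 4*τ/η = (η*((1-4*η)*p) - τ*X - 4*τ)/η by
      field_simp]
    rw [div_le_iff₀ hη0]
    linear_combination hkey2
  rcases lt_or_ge p 0 with hp | hp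
  · -- negative price: trivial
    have h1 : (0:ℝ) < 1-4*η := by linarith
    have h2 : η*((1-4*η)*p) ≤ 0 :=
      mul_nonpos_of_nonneg_of_nonpos hη0.le
        (mul_nonpos_of_nonneg_of_nonpos h1.le hp.le)
    have h3 : 0 ≤ τ*X := mul_nonneg hτ0.le hX0
    have h4 : 0 ≤ η*(s' v).2 := mul_nonneg hη0.le hp'0
    linarith
  · -- nonnegative price
    have hpX : p ≤ X := by linarith
    have hpH : p ≤ H := le_trans hpX hXH
    have hφe : phi H η τ Ka Kp (s v)
        = ((fun j => rd (VaF τ Ka) ((s v).1 j)), rd (VpF τ Kp) ((1-η)*p)) := by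
      rw [phi, if_pos ⟨hp, hpH⟩]
    have hφe_mem : phi H η τ Ka Kp (s v) ∈ M' := by
      rw [hM']
      exact Finset.mem_insert_of_mem (Finset.mem_image_of_mem _ (hs v).1)
    -- lower bound on the utility of the rounded chosen entry
    have hsumlow : (1-τ)*X - τ ≤ ∑ j, v j * rd (VaF τ Ka) ((s v).1 j) := by
      have hcoord : ∀ j : Fin m, (1-τ)*(v j * (s v).1 j) - τ/m
          ≤ v j * rd (VaF τ Ka) ((s v).1 j) := by
        intro j
        refine alloc_coord hτ0 hτ1 hH0 hm0 hKa ?_ (hv j).2 (hlott.1 j) ?_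
        · linarith [(hv j).1]
        · calc (s v).1 j ≤ ∑ i, (s v).1 i :=
              Finset.single_le_sum (fun i _ => hlott.1 i) (Finset.mem_univ j)
            _ ≤ 1 := hlott.2
      calc (1-τ)*X - τ = ∑ j : Fin m, ((1-τ)*(v j * (s v).1 j) - τ/m) := by
            rw [Finset.sum_sub_distrib, ← Finset.mul_sum, Finset.sum_const,
              Finset.card_univ, Fintype.card_fin, nsmul_eq_mul]
            have : (m:ℝ) * (τ/m) = τ := by field_simp
            rw [this, ← hXdef]
        _ ≤ _ := Finset.sum_le_sum fun j _ => hcoord j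
    have hL : (1-τ)*X - τ - (1-η)*p ≤ utility v (phi H η τ Ka Kp (s v)) := by
      rw [hφe]
      simp only [utility]
      have h1 : rd (VpF τ Kp) ((1-η)*p) ≤ (1-η)*p :=
        rd_le (zero_mem_VpF τ Kp) (mul_nonneg (by linarith) hp)
      linarith
    have hmax : utility v (phi H η τ Ka Kp (s v)) ≤ utility v (s' v) :=
      (hs' v).2 _ hφe_mem
    -- case analysis on the chosen entry of M'
    have hcases : s' v = ((0,0) : Entry m) ∨
        ∃ f ∈ M, (0 ≤ f.2 ∧ f.2 ≤ H) ∧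
          s' v = ((fun j => rd (VaF τ Ka) (f.1 j)), rd (VpF τ Kp) ((1-η)*f.2)) := by
      have hmem := (hs' v).1
      rw [hM'] at hmem
      rcases Finset.mem_insert.1 hmem with h | h
      · left; exact h
      · obtain ⟨f, hf, hfe⟩ := Finset.mem_image.1 h
        by_cases hc : 0 ≤ f.2 ∧ f.2 ≤ H
        · right; exact ⟨f, hf, hc, by rw [← hfe, phi, if_pos hc]⟩
        · left; rw [← hfe, phi, if_neg hc]
    rcases hcases with hzero | ⟨f, hf, ⟨hq0, hqH⟩, hsf⟩
    · -- chose the null entry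
      have h0 : utility v (phi H η τ Ka Kp (s v)) ≤ 0 := by
        rw [hzero, utility_zero] at hmax
        exact hmax
      have hLle0 : (1-τ)*X - τ - (1-η)*p ≤ 0 := le_trans hL h0
      have e1 : (1-τ)*p ≤ (1-τ)*X := mul_le_mul_of_nonneg_left hpX (by linarith)
      have hz2 : (s' v).2 = 0 := by rw [hzero]
      rw [hz2, mul_zero]
      linarith [hLle0, hpX, mul_nonneg (mul_nonneg hη0.le hη0.le) hp,
        mul_le_mul_of_nonneg_left hpX hτ0.le]
    · -- chose a rounded entry
      set q := f.2 with hqdef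
      set Y := ∑ j, v j * f.1 j with hYdef
      have hflott : IsLottery m f.1 := hM.2 f hf
      have hQdef : (s' v).2 = rd (VpF τ Kp) ((1-η)*q) := by rw [hsf]
      set Qq := rd (VpF τ Kp) ((1-η)*q) with hQqdef
      clear_value Qq
      have hyq0 : 0 ≤ (1-η)*q := mul_nonneg (by linarith) hq0
      have hyqq : (1-η)*q ≤ q := by
        calc (1-η)*q ≤ 1*q := mul_le_mul_of_nonneg_right (by linarith) hq0
          _ = q := one_mul q
      have hyqH : (1-η)*q ≤ H := le_trans hyqq hqH
      have hQ0 : 0 ≤ Qq := by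
        rw [hQqdef]; exact rd_nonneg (zero_mem_VpF τ Kp) hyq0
      have hupper : utility v (s' v) ≤ Y - ((1-η)*q - τ*((1-η)*q) - τ) := by
        rw [hsf]
        simp only [utility]
        have h1 : ∑ j, v j * rd (VaF τ Ka) (f.1 j) ≤ Y := by
          refine Finset.sum_le_sum fun j _ => ?_
          exact mul_le_mul_of_nonneg_left
            (rd_le (zero_mem_VaF τ Ka) (hflott.1 j)) (by linarith [(hv j).1])
        have h2 : (1-η)*q - τ*((1-η)*q) - τ ≤ rd (VpF τ Kp) ((1-η)*q) :=
          price_round hτ0 hτ1 hH0 hKp hyq0 hyqH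
        linarith
      have huf : Y - q ≤ X - p := by
        have := (hs v).2 f hf
        simp only [utility] at this
        linarith
      have c1 : (1-τ)*X - τ - (1-η)*p ≤ Y - ((1-η)*q - τ*((1-η)*q) - τ) :=
        le_trans hL (le_trans hmax hupper)
      have hq : η*p - τ*X - 2*τ ≤ (η+τ)*q := by
        linarith [c1, huf, mul_nonneg (mul_nonneg hτ0.le hη0.le) hq0]
      have hQ : (1-η)*q - τ*q - τ ≤ Qq := by
        have h2 : (1-η)*q - τ*((1-η)*q) - τ ≤ Qq := by
          rw [hQqdef]; exact price_round hτ0 hτ1 hH0 hKp hyq0 hyqH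
        linarith [h2, mul_nonneg (mul_nonneg hτ0.le hη0.le) hq0]
      rw [hQdef]
      -- final polynomial inequality
      have hcoef1 : (0:ℝ) ≤ 3*η^2 + 3*η*τ - τ := by nlinarith [hτη, mul_pos hη0 hτ0]
      have hpos : (0:ℝ) < η + τ := by linarith
      have hW : (η+τ)*(η*((1-4*η)*p) - τ*X - 4*τ) ≤ (η+τ)*(η*Qq) := by
        have s1 : η*(1-η-τ)*(η*p - τ*X - 2*τ) ≤ η*(1-η-τ)*((η+τ)*q) := by
          apply mul_le_mul_of_nonneg_left hq
          apply mul_nonneg hη0.le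
          linarith
        have s2 : (η+τ)*(η*((1-η)*q - τ*q - τ)) ≤ (η+τ)*(η*Qq) := by
          apply mul_le_mul_of_nonneg_left _ hpos.le
          exact mul_le_mul_of_nonneg_left hQ hη0.le
        have t1 : (0:ℝ) ≤ η*(3*η^2 + 3*η*τ - τ)*p :=
          mul_nonneg (mul_nonneg hη0.le hcoef1) hp
        have t2 : (0:ℝ) ≤ τ*(η^2 + η*τ + τ)*X := by
          apply mul_nonneg (mul_nonneg hτ0.le (by positivity)) hX0
        have hconst : (0:ℝ) < 2*η*τ + η^2*τ + η*τ^2 + 4*τ^2 := by positivity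
        have hring : (η+τ)*(η*Qq) - (η+τ)*(η*((1-4*η)*p) - τ*X - 4*τ)
            = (η*(1-η-τ)*((η+τ)*q) - η*(1-η-τ)*(η*p - τ*X - 2*τ))
            + ((η+τ)*(η*Qq) - (η+τ)*(η*((1-η)*q - τ*q - τ)))
            + η*(3*η^2 + 3*η*τ - τ)*p + τ*(η^2 + η*τ + τ)*X
            + (2*η*τ + η^2*τ + η*τ^2 + 4*τ^2) := by ring
        linarith [s1, s2, t1, t2, hconst, hring]
      exact le_of_mul_le_mul_left hW hpos

end Key
end MenuAux

set_option maxHeartbeats 1000000 in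
open MenuAux in
/-- **Theorem 2 (general case).** There is a universal constant `c > 0` such that for every
`m ≥ 2`, `H ≥ 2`, `ε ∈ (0, 1/2)` and every distribution `D` supported on `[1, H]^m`, there
is a menu with at most `((log₂ H + log₂ m + log₂(1/ε))/ε)^(c·m)` entries whose revenue is at
least a `(1 - ε)` fraction of the optimal revenue. -/
theorem menu_size_general :
    ∃ c : ℝ, 0 < c ∧
      ∀ (m : ℕ), 2 ≤ m → ∀ H : ℝ, 2 ≤ H → ∀ ε : ℝ, 0 < ε → ε < 1 / 2 →
        ∀ D : Measure (Fin m → ℝ), IsProbabilityMeasure D →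
          D {v | ∀ j, v j ∈ Set.Icc (1 : ℝ) H} = 1 →
          ∃ M : Finset (Entry m), IsMenu m M ∧
            (M.card : ℝ) ≤
              ((Real.logb 2 H + Real.logb 2 m + Real.logb 2 (1 / ε)) / ε) ^ (c * m) ∧
            (1 - ε) * OPT D ≤ Rev D M := by
  classical
  refine ⟨16, by norm_num, ?_⟩
  intro m hm H hH ε hε0 hε2 D hD hsupp
  haveI : NeZero m := ⟨by omega⟩
  have hbox : D (box m H) = 1 := hsupp
  have hH0 : (0:ℝ) ≤ H := by linarith
  have hH1 : (1:ℝ) ≤ H := by linarith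
  set L := Real.logb 2 H with hLdef
  have hL1 : 1 ≤ L := one_le_logb hH
  set η := ε/8 with hηdef
  set τ := ε^2/(512*L) with hτdef
  have hη0 : 0 < η := by rw [hηdef]; linarith
  have hη1 : η ≤ 1/16 := by rw [hηdef]; linarith
  have hτ0 : 0 < τ := by rw [hτdef]; positivity
  have hτ512 : τ ≤ ε^2/512 := by
    rw [hτdef]
    apply div_le_div_of_nonneg_left (by positivity) (by norm_num) (by linarith)
  have hτη : 2*τ ≤ η^2 := by
    have h1 : η^2 = ε^2/64 := by rw [hηdef]; ring
    rw [h1]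
    linarith
  have hτ1 : τ ≤ 1 := by nlinarith
  have hOPT1 : 1 ≤ OPT D := one_le_OPT hbox hH1
  have hOPT0 : 0 ≤ OPT D := by linarith
  -- grids
  have hA1 : (1:ℝ) < 1 + τ := by linarith
  have hA0 : (0:ℝ) < 1 + τ := by linarith
  have hmR : (2:ℝ) ≤ (m:ℝ) := by exact_mod_cast hm
  have hmHτpos : (0:ℝ) < (m:ℝ)*H/τ := by positivity
  have hmHτ1 : (1:ℝ) ≤ (m:ℝ)*H/τ := by
    rw [le_div_iff₀ hτ0]
    nlinarith
  have hHτ1 : (1:ℝ) ≤ H/τ := by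
    rw [le_div_iff₀ hτ0]
    nlinarith
  set Ka := ⌈Real.logb (1+τ) ((m:ℝ)*H/τ)⌉₊ with hKadef
  set Kp := ⌈Real.logb (1+τ) (H/τ)⌉₊ with hKpdef
  have hKa : ((1+τ)⁻¹:ℝ)^Ka ≤ τ/((m:ℝ)*H) := by
    have h1 : (m:ℝ)*H/τ ≤ (1+τ)^Ka := by
      have h2 : Real.logb (1+τ) ((m:ℝ)*H/τ) ≤ (Ka:ℝ) := Nat.le_ceil _
      have h3 : (1+τ) ^ Real.logb (1+τ) ((m:ℝ)*H/τ) ≤ (1+τ) ^ (Ka:ℝ) :=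
        Real.rpow_le_rpow_of_exponent_le hA1.le h2
      rwa [Real.rpow_logb hA0 (by linarith) hmHτpos, Real.rpow_natCast] at h3
    rw [inv_pow]
    calc ((1+τ)^Ka)⁻¹ ≤ ((m:ℝ)*H/τ)⁻¹ := inv_anti₀ hmHτpos h1
      _ = τ/((m:ℝ)*H) := by rw [inv_div]
  have hKp : H/τ ≤ ((1+τ):ℝ)^Kp := by
    have h2 : Real.logb (1+τ) (H/τ) ≤ (Kp:ℝ) := Nat.le_ceil _
    have h3 : (1+τ) ^ Real.logb (1+τ) (H/τ) ≤ (1+τ) ^ (Kp:ℝ) :=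
      Real.rpow_le_rpow_of_exponent_le hA1.le h2
    rwa [Real.rpow_logb hA0 (by linarith) (by positivity), Real.rpow_natCast] at h3
  -- near-optimal menu and selection
  obtain ⟨r, hrmem, hr⟩ := exists_lt_of_lt_csSup (nonempty_OPTSet (D := D) (m := m))
    (show OPT D - ε/8 < sSup {r | ∃ M : Finset (Entry m), IsMenu m M ∧ r = Rev D M} by
      rw [← OPT]; linarith)
  obtain ⟨M₀, hM₀, rfl⟩ := hrmem
  obtain ⟨r', hr'mem, hr'⟩ := exists_lt_of_lt_csSup (nonempty_selSet (D := D) hM₀)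
    (show OPT D - ε/8 < sSup {r | ∃ s, IsSelection M₀ s ∧ r = revSel D s} by
      rw [← Rev]; linarith)
  obtain ⟨s₀, hs₀, rfl⟩ := hr'mem
  have hrev0 : 0 < revSel D s₀ := by linarith
  have hint0 : Integrable (fun v => (s₀ v).2) D := by
    by_contra hcon
    rw [revSel, integral_undef hcon] at hrev0
    exact lt_irrefl 0 hrev0
  -- the small menu
  set M' := insert ((0,0) : Entry m) (M₀.image (phi H η τ Ka Kp)) with hM'def
  have hM'menu : IsMenu m M' := by
    constructor
    · exact Finset.mem_insert_self _ _
    · intro e he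
      rcases Finset.mem_insert.1 he with rfl | he
      · exact ⟨fun j => le_refl 0, by simp⟩
      · obtain ⟨f, hf, rfl⟩ := Finset.mem_image.1 he
        exact phi_lottery H η τ Ka Kp (hM₀.2 f hf)
  have hs' : IsSelection M' (sel M') := sel_isSelection (Finset.mem_insert_self _ _)
  refine ⟨M', hM'menu, ?_, ?_⟩
  · -- cardinality bound
    set a2 := Real.logb 2 (m:ℝ) with ha2def
    set a3 := Real.logb 2 (1/ε) with ha3def
    set B := (L + a2 + a3)/ε with hBdef
    have ha2 : 1 ≤ a2 := one_le_logb hmR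
    have ha3 : 1 ≤ a3 := by
      apply one_le_logb
      rw [le_div_iff₀ hε0]; linarith
    have hA3 : 3 ≤ L + a2 + a3 := by linarith
    have hB6 : 6 ≤ B := by
      rw [hBdef, le_div_iff₀ hε0]
      nlinarith
    have hB1 : (1:ℝ) ≤ B := by linarith
    have hB0 : (0:ℝ) < B := by linarith
    have hεB : L + a2 + a3 = B * ε := by
      rw [hBdef]; field_simp
    have hlog2pos : (0:ℝ) < Real.log 2 := Real.log_pos (by norm_num)
    have hlog2lt1 : Real.log 2 < 1 := by
      have := Real.log_two_lt_d9
      linarith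
    have hlog_le_logb : ∀ x : ℝ, 1 ≤ x → Real.log x ≤ Real.logb 2 x := by
      intro x hx
      have hlx : 0 ≤ Real.log x := Real.log_nonneg hx
      rw [Real.logb, le_div_iff₀ hlog2pos]
      nlinarith
    have hlogA : τ/2 ≤ Real.log (1+τ) := by
      have h1 : Real.log ((1+τ)⁻¹) ≤ (1+τ)⁻¹ - 1 :=
        Real.log_le_sub_one_of_pos (by positivity)
      rw [Real.log_inv] at h1
      have h2 : 1 - (1+τ)⁻¹ = τ/(1+τ) := by field_simp; ring
      have h3 : τ/(1+τ) ≤ Real.log (1+τ) := by linarith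
      refine le_trans ?_ h3
      apply div_le_div_of_nonneg_left hτ0.le (by linarith) (by linarith)
    have hlogτinv : Real.log (1/τ) ≤ 7 + L + 2*a3 := by
      have hval : (1:ℝ)/τ = 512 * L * (1/ε)^2 := by
        rw [hτdef]; field_simp
      rw [hval]
      rw [Real.log_mul (by positivity) (by positivity),
        Real.log_mul (by norm_num) (by positivity), Real.log_pow]
      have h512 : Real.log 512 ≤ 7 := by
        rw [Real.log_le_iff_le_exp (by norm_num)]
        have h1 : (2.7182818283:ℝ)^(7:ℕ) ≤ (Real.exp 1)^(7:ℕ) := by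
          apply pow_le_pow_left₀ (by norm_num)
          linarith [Real.exp_one_gt_d9]
        have h2 : Real.exp 7 = (Real.exp 1)^(7:ℕ) := by
          rw [← Real.exp_nat_mul]; norm_num
        rw [h2]
        nlinarith [h1]
      have hlogL : Real.log L ≤ L := by
        calc Real.log L ≤ L - 1 := Real.log_le_sub_one_of_pos (by linarith)
          _ ≤ L := by linarith
      have hlogε : Real.log (1/ε) ≤ a3 :=
        hlog_le_logb _ (by rw [le_div_iff₀ hε0]; linarith)
      push_cast
      linarith
    have hlogmH : Real.log ((m:ℝ)*H/τ) ≤ 5*(L + a2 + a3) := by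
      have hval : (m:ℝ)*H/τ = (m:ℝ) * H * (1/τ) := by ring
      rw [hval, Real.log_mul (by positivity) (by positivity),
        Real.log_mul (by positivity) (by positivity)]
      have h1 : Real.log (m:ℝ) ≤ a2 := hlog_le_logb _ (by linarith)
      have h2 : Real.log H ≤ L := hlog_le_logb _ hH1
      linarith [hlogτinv, hA3]
    have hKa2 : (Ka:ℝ) + 2 ≤ 5123 * B^2 := by
      have hlogb_nonneg : 0 ≤ Real.logb (1+τ) ((m:ℝ)*H/τ) := Real.logb_nonneg hA1 hmHτ1
      have hceil : (Ka:ℝ) < Real.logb (1+τ) ((m:ℝ)*H/τ) + 1 :=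
        Nat.ceil_lt_add_one hlogb_nonneg
      have hlogb_le : Real.logb (1+τ) ((m:ℝ)*H/τ) ≤ 10*(L + a2 + a3)/τ := by
        rw [Real.logb]
        have hnum : 0 ≤ Real.log ((m:ℝ)*H/τ) := Real.log_nonneg hmHτ1
        calc Real.log ((m:ℝ)*H/τ) / Real.log (1+τ)
            ≤ Real.log ((m:ℝ)*H/τ) / (τ/2) :=
              div_le_div_of_nonneg_left hnum (by positivity) hlogA
          _ ≤ (5*(L + a2 + a3)) / (τ/2) := by gcongr
          _ = 10*(L + a2 + a3)/τ := by field_simp; ring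
      have hτval : 10*(L + a2 + a3)/τ ≤ 5120 * B^2 := by
        have h1 : 10*(L + a2 + a3)/τ = 5120*((L + a2 + a3)*L)/ε^2 := by
          rw [hτdef]; field_simp; ring
        rw [h1]
        have hLB : L ≤ B*ε := by linarith [hεB]
        have hsum0 : 0 ≤ L + a2 + a3 := by linarith
        have h2 : (L + a2 + a3)*L ≤ (B*ε)*(B*ε) := by
          calc (L + a2 + a3)*L ≤ (L + a2 + a3)*(B*ε) :=
                mul_le_mul_of_nonneg_left hLB hsum0
            _ = (B*ε)*(B*ε) := by rw [hεB]
        calc 5120*((L + a2 + a3)*L)/ε^2 ≤ 5120*((B*ε)*(B*ε))/ε^2 := by gcongr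
          _ = 5120 * B^2 := by field_simp
      have hB2 : (1:ℝ) ≤ B^2 := by nlinarith
      linarith
    have hKpKa : Kp ≤ Ka := by
      apply Nat.ceil_le_ceil
      apply Real.logb_le_logb_of_le hA1 (by positivity)
      gcongr
      nlinarith
    have hKp2 : (Kp:ℝ) + 2 ≤ 5123 * B^2 := by
      have : (Kp:ℝ) ≤ (Ka:ℝ) := by exact_mod_cast hKpKa
      linarith
    -- grid containment
    set G : Finset (Entry m) :=
      (Fintype.piFinset fun _ : Fin m => VaF τ Ka) ×ˢ VpF τ Kp with hGdef
    have hsub : M' ⊆ G := by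
      intro e he
      have hzeroG : ((0,0) : Entry m) ∈ G := by
        rw [hGdef, Finset.mem_product]
        constructor
        · rw [Fintype.mem_piFinset]
          intro j
          exact zero_mem_VaF τ Ka
        · exact zero_mem_VpF τ Kp
      rcases Finset.mem_insert.1 he with rfl | he
      · exact hzeroG
      · obtain ⟨f, _, rfl⟩ := Finset.mem_image.1 he
        rw [phi]
        split_ifs with hc
        · rw [hGdef, Finset.mem_product]
          constructor
          · rw [Fintype.mem_piFinset]
            intro j
            exact rd_mem (zero_mem_VaF τ Ka) _
          · exact rd_mem (zero_mem_VpF τ Kp) _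
        · exact hzeroG
    have hcardG : G.card = (VaF τ Ka).card ^ m * (VpF τ Kp).card := by
      rw [hGdef, Finset.card_product, Fintype.card_piFinset]
      simp [Finset.prod_const]
    have hcard1 : (M'.card : ℝ) ≤ ((Ka + 2 : ℕ) : ℝ)^m * ((Kp + 2 : ℕ) : ℝ) := by
      have h1 : M'.card ≤ G.card := Finset.card_le_card hsub
      have h2 : G.card ≤ (Ka + 2)^m * (Kp + 2) := by
        rw [hcardG]
        exact Nat.mul_le_mul (Nat.pow_le_pow_left (card_VaF τ Ka) m) (card_VpF τ Kp)
      have h3 : M'.card ≤ (Ka + 2)^m * (Kp + 2) := le_trans h1 h2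
      calc (M'.card : ℝ) ≤ (((Ka + 2)^m * (Kp + 2) : ℕ) : ℝ) := by exact_mod_cast h3
        _ = ((Ka + 2 : ℕ) : ℝ)^m * ((Kp + 2 : ℕ) : ℝ) := by push_cast; ring
    have hB8 : ∀ x : ℝ, x ≤ 5123 * B^2 → x ≤ B^(8:ℕ) := by
      intro x hx
      have h1 : (5123:ℝ) ≤ B^(6:ℕ) := by
        calc (5123:ℝ) ≤ 6^(6:ℕ) := by norm_num
          _ ≤ B^(6:ℕ) := pow_le_pow_left₀ (by norm_num) hB6 6
      have h2 : 5123 * B^2 ≤ B^(6:ℕ) * B^2 :=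
        mul_le_mul_of_nonneg_right h1 (sq_nonneg B)
      have h3 : B^(6:ℕ) * B^2 = B^(8:ℕ) := by ring
      linarith
    have hKaB : ((Ka + 2 : ℕ) : ℝ) ≤ B^(8:ℕ) := by
      apply hB8
      push_cast
      linarith
    have hKpB : ((Kp + 2 : ℕ) : ℝ) ≤ B^(8:ℕ) := by
      apply hB8
      push_cast
      linarith
    have hfinal : (M'.card : ℝ) ≤ B^(16*m : ℕ) := by
      calc (M'.card : ℝ) ≤ ((Ka + 2 : ℕ) : ℝ)^m * ((Kp + 2 : ℕ) : ℝ) := hcard1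
        _ ≤ (B^(8:ℕ))^m * B^(8:ℕ) := by
            apply mul_le_mul
            · exact pow_le_pow_left₀ (Nat.cast_nonneg _) hKaB m
            · exact hKpB
            · positivity
            · positivity
        _ = B^(8*m+8 : ℕ) := by rw [← pow_mul, ← pow_add]
        _ ≤ B^(16*m : ℕ) := pow_le_pow_right₀ hB1 (by omega)
    calc (M'.card : ℝ) ≤ B^(16*m : ℕ) := hfinal
      _ = B^((16:ℝ)*m) := by
          rw [← Real.rpow_natCast B (16*m)]
          congr 1
          push_cast
          ring
  · -- revenue bound
    have hfrac : τ/η = ε/(64*L) := by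
      rw [hηdef, hτdef]
      field_simp
      ring
    have h4η : 1-4*η = 1 - ε/2 := by rw [hηdef]; ring
    have hLpos : (0:ℝ) < L := by linarith
    clear_value M' Ka Kp τ η L
    have hη16 : η ≤ 1 := by linarith
    have hM'price : ∀ e' ∈ M', 0 ≤ e'.2 ∧ e'.2 ≤ H := by
      intro e' he'
      rw [hM'def] at he'
      rcases Finset.mem_insert.1 he' with rfl | he'
      · exact ⟨le_refl 0, by simpa using hH0⟩
      · obtain ⟨f, _, rfl⟩ := Finset.mem_image.1 he'
        exact ⟨phi_price_nonneg H η τ Ka Kp hη16 f,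
          phi_price_le H η τ Ka Kp hη0.le hη16 hH0 f⟩
    have hint' : Integrable (fun v => (sel M' v).2) D := by
      refine Integrable.mono' (integrable_const H)
        (measurable_snd.comp (measurable_sel M')).aestronglyMeasurable ?_
      refine Filter.Eventually.of_forall fun v => ?_
      have h := hM'price _ (hs' v).1
      rw [Real.norm_eq_abs, abs_of_nonneg h.1]
      exact h.2
    have hintmx : Integrable (mx (m := m)) D := integrable_mx hbox hH0
    have hkeyae : ∀ᵐ v ∂D,
        (1-4*η)*(s₀ v).2 - (τ/η)*(mx v) - 4*τ/η ≤ (sel M' v).2 := by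
      filter_upwards [ae_box hbox] with v hv
      exact key_pointwise hH1 hη0 hη1 hτ0 hτη hKa hKp hM₀ hs₀ hM'def hs' hv
    have hcomb : Integrable
        (fun v => (1-4*η)*(s₀ v).2 - (τ/η)*(mx v) - 4*τ/η) D :=
      (((hint0.const_mul _).sub (hintmx.const_mul _)).sub (integrable_const _) :)
    have hmono : ∫ v, ((1-4*η)*(s₀ v).2 - (τ/η)*(mx v) - 4*τ/η) ∂D
        ≤ ∫ v, (sel M' v).2 ∂D :=
      integral_mono_ae hcomb hint' hkeyae
    have hintA : Integrable (fun v => (1-4*η)*(s₀ v).2) D := hint0.const_mul _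
    have hintB : Integrable (fun v => (τ/η)*(mx v)) D := hintmx.const_mul _
    have hintAB : Integrable (fun v => (1-4*η)*(s₀ v).2 - (τ/η)*(mx v)) D :=
      hintA.sub hintB
    have hsplit : ∫ v, ((1-4*η)*(s₀ v).2 - (τ/η)*(mx v) - 4*τ/η) ∂D
        = (1-4*η)*(revSel D s₀) - (τ/η)*(∫ v, mx v ∂D) - 4*τ/η := by
      rw [integral_sub hintAB (integrable_const _),
        integral_sub hintA hintB,
        integral_const_mul, integral_const_mul, integral_const]
      rw [revSel]
      simp
    have hmxle : ∫ v, mx v ∂D ≤ 8 * L * OPT D := by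
      rw [hLdef]; exact integral_mx_le hbox hH
    have hfracpos : 0 < τ/η := by positivity
    have hterm1 : (τ/η)*(∫ v, mx v ∂D) ≤ (ε/8) * OPT D := by
      calc (τ/η)*(∫ v, mx v ∂D) ≤ (τ/η)*(8*L*OPT D) := by
            apply mul_le_mul_of_nonneg_left hmxle hfracpos.le
        _ = (ε/(64*L))*(8*L*OPT D) := by rw [hfrac]
        _ = (ε/8) * OPT D := by field_simp; ring
    have hterm2 : 4*τ/η ≤ (ε/16) * OPT D := by
      have h1 : 4*τ/η = 4*(τ/η) := by ring
      rw [h1, hfrac]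
      have h2 : 4*(ε/(64*L)) = ε/(16*L) := by field_simp; ring
      rw [h2]
      have h3 : ε/(16*L) ≤ ε/16 := by
        apply div_le_div_of_nonneg_left hε0.le (by norm_num) (by linarith)
      calc ε/(16*L) ≤ ε/16 := h3
        _ = (ε/16) * 1 := by ring
        _ ≤ (ε/16) * OPT D := by
            apply mul_le_mul_of_nonneg_left hOPT1 (by linarith)
    have hterm3 : (1-4*η)*(OPT D - ε/8) ≤ (1-4*η)*(revSel D s₀) := by
      apply mul_le_mul_of_nonneg_left (by linarith) (by rw [hηdef]; linarith)
    have hchain : (1-ε) * OPT D ≤ revSel D (sel M') := by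
      rw [revSel]
      have hfin : (1-ε) * OPT D
          ≤ (1-4*η)*(OPT D - ε/8) - (ε/8)*OPT D - (ε/16)*OPT D := by
        rw [h4η]
        linarith [mul_le_mul_of_nonneg_right hOPT1 hε0.le, sq_nonneg ε]
      calc (1-ε) * OPT D ≤ (1-4*η)*(OPT D - ε/8) - (ε/8)*OPT D - (ε/16)*OPT D := hfin
        _ ≤ (1-4*η)*(revSel D s₀) - (τ/η)*(∫ v, mx v ∂D) - 4*τ/η := by
            linarith [hterm1, hterm2, hterm3]
        _ = ∫ v, ((1-4*η)*(s₀ v).2 - (τ/η)*(mx v) - 4*τ/η) ∂D := hsplit.symm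
        _ ≤ ∫ v, (sel M' v).2 ∂D := hmono
    calc (1-ε) * OPT D ≤ revSel D (sel M') := hchain
      _ ≤ Rev D M' := revSel_le_Rev hM'menu hs' hbox hH0
end

section
/- There exists a universal constant c > 0 such that for every integer m ≥ 2, every real H ≥ 2, every ε ∈ (0, 1/2), and every probability distribution D supported on the set of monotone valuations {v ∈ [1, H]^m : v_1 ≤ v_2 ≤ … ≤ v_m}, there exists a menu M with at most m^{c·((log₂ H)³ + (log₂(1/ε))²)/ε²} entries such that Rev_D(M) ≥ (1 − ε) · OPT(D). -/
open MeasureTheory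

noncomputable def pickL {m : ℕ} (l : List (Entry m)) (v : Fin m → ℝ) : Entry m :=
  l.foldr (fun e r => if utility v e < utility v r then r else e) (0, 0)

lemma pickL_nil {m : ℕ} (v : Fin m → ℝ) : pickL [] v = (0, 0) := rfl

lemma pickL_cons {m : ℕ} (e : Entry m) (l : List (Entry m)) (v : Fin m → ℝ) :
    pickL (e :: l) v = if utility v e < utility v (pickL l v) then pickL l v else e := rfl

lemma pickL_eq_or_mem {m : ℕ} (l : List (Entry m)) (v : Fin m → ℝ) :
    pickL l v = (0, 0) ∨ pickL l v ∈ l := by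
  induction l with
  | nil => left; rfl
  | cons e l ih =>
    rw [pickL_cons]
    split
    · rcases ih with h | h
      · left; exact h
      · right; exact List.mem_cons_of_mem _ h
    · right; exact List.mem_cons_self

lemma le_utility_pickL {m : ℕ} (l : List (Entry m)) (v : Fin m → ℝ) :
    ∀ e ∈ l, utility v e ≤ utility v (pickL l v) := by
  induction l with
  | nil => simp
  | cons e l ih =>
    intro e' he'
    rw [pickL_cons]
    rcases List.mem_cons.1 he' with rfl | he'
    · split
      · next h => exact le_of_lt h
      · exact le_rfl
    · split
      · exact ih e' he'
      · next h => exact (ih e' he').trans (not_lt.1 h)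

lemma utility_pickL_cons {m : ℕ} (e : Entry m) (l : List (Entry m)) (v : Fin m → ℝ) :
    utility v (pickL (e :: l) v) = max (utility v e) (utility v (pickL l v)) := by
  rw [pickL_cons]
  split
  · next h => exact (max_eq_right (le_of_lt h)).symm
  · next h => exact (max_eq_left (not_lt.1 h)).symm

lemma measurable_utility_fixed {m : ℕ} (e : Entry m) :
    Measurable (fun v : Fin m → ℝ => utility v e) := by
  unfold utility
  exact (Finset.measurable_sum _ fun j _ => (measurable_pi_apply j).mul_const _).sub measurable_const

lemma measurable_pickL {m : ℕ} (l : List (Entry m)) :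
    Measurable (fun v => (pickL l v).2) ∧ Measurable (fun v => utility v (pickL l v)) := by
  induction l with
  | nil =>
    constructor
    · simp only [pickL_nil]; exact measurable_const
    · simp only [pickL_nil]
      exact measurable_utility_fixed (0, 0)
  | cons e l ih =>
    have hset : MeasurableSet {v : Fin m → ℝ | utility v e < utility v (pickL l v)} :=
      measurableSet_lt (measurable_utility_fixed e) ih.2
    constructor
    · have : (fun v => (pickL (e :: l) v).2)
          = fun v => if utility v e < utility v (pickL l v) then (pickL l v).2 else e.2 := by
        funext v; rw [pickL_cons]; split <;> rfl
      rw [this]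
      exact Measurable.ite hset ih.1 measurable_const
    · have : (fun v => utility v (pickL (e :: l) v))
          = fun v => max (utility v e) (utility v (pickL l v)) := by
        funext v; exact utility_pickL_cons e l v
      rw [this]
      exact (measurable_utility_fixed e).max ih.2


noncomputable def sel {m : ℕ} (M : Finset (Entry m)) : (Fin m → ℝ) → Entry m :=
  fun v => pickL M.toList v

lemma sel_isSelection {m : ℕ} {M : Finset (Entry m)} (h0 : (0, 0) ∈ M) :
    IsSelection M (sel M) := by
  intro v
  constructor
  · rcases pickL_eq_or_mem M.toList v with h | h
    · rw [sel, h]; exact h0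
    · exact Finset.mem_toList.1 h
  · intro e he
    exact le_utility_pickL M.toList v e (Finset.mem_toList.2 he)

lemma sel_mem {m : ℕ} {M : Finset (Entry m)} (h0 : (0, 0) ∈ M) (v : Fin m → ℝ) :
    sel M v ∈ M := (sel_isSelection h0 v).1

/-- price of any selection is bounded by the max price of the menu (which is ≥ 0). -/
lemma exists_priceBound {m : ℕ} (M : Finset (Entry m)) (h0 : (0, 0) ∈ M) :
    ∃ B : ℝ, 0 ≤ B ∧ ∀ e ∈ M, e.2 ≤ B ∧ -B ≤ e.2 := by
  classical
  obtain ⟨B, hB⟩ := (M.image (fun e => |e.2|)).exists_max_image id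
    ⟨|(0:ℝ)|, Finset.mem_image_of_mem _ h0⟩
  refine ⟨B, ?_, ?_⟩
  · obtain ⟨e, _, rfl⟩ := Finset.mem_image.1 hB.1
    exact abs_nonneg _
  · intro e he
    have h1 : |e.2| ≤ B := hB.2 |e.2| (Finset.mem_image_of_mem _ he)
    have h2 := le_abs_self e.2
    have h3 := neg_abs_le e.2
    exact ⟨h2.trans h1, by linarith⟩

lemma revSel_le_bound {m : ℕ} {D : Measure (Fin m → ℝ)} [IsProbabilityMeasure D]
    {s : (Fin m → ℝ) → Entry m} {B : ℝ} (hB : 0 ≤ B) (h : ∀ v, (s v).2 ≤ B) :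
    revSel D s ≤ B := by
  rw [revSel]
  by_cases hi : Integrable (fun v => (s v).2) D
  · calc ∫ v, (s v).2 ∂D ≤ ∫ _, B ∂D := integral_mono hi (integrable_const B) h
    _ = B := by simp
  · rw [integral_undef hi]; exact hB

lemma revSet_bddAbove {m : ℕ} (D : Measure (Fin m → ℝ)) [IsProbabilityMeasure D]
    (M : Finset (Entry m)) (h0 : (0, 0) ∈ M) :
    BddAbove {r | ∃ s, IsSelection M s ∧ r = revSel D s} := by
  obtain ⟨B, hB0, hB⟩ := exists_priceBound M h0
  refine ⟨B, fun r hr => ?_⟩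
  obtain ⟨s, hs, rfl⟩ := hr
  exact revSel_le_bound hB0 (fun v => (hB _ (hs v).1).1)

lemma revSel_le_Rev {m : ℕ} (D : Measure (Fin m → ℝ)) [IsProbabilityMeasure D]
    {M : Finset (Entry m)} (h0 : (0, 0) ∈ M) {s} (hs : IsSelection M s) :
    revSel D s ≤ Rev D M :=
  le_csSup (revSet_bddAbove D M h0) ⟨s, hs, rfl⟩


section
variable {m : ℕ} (H : ℝ)

def box (m : ℕ) (H : ℝ) : Set (Fin m → ℝ) :=
  {v | (∀ j, v j ∈ Set.Icc (1 : ℝ) H) ∧ Monotone v}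

lemma measurableSet_box : MeasurableSet (box m H) := by
  have h1 : MeasurableSet {v : Fin m → ℝ | ∀ j, v j ∈ Set.Icc (1:ℝ) H} := by
    rw [Set.setOf_forall]
    exact MeasurableSet.iInter fun j => (measurable_pi_apply j) measurableSet_Icc
  have h2 : MeasurableSet {v : Fin m → ℝ | Monotone v} := by
    have : {v : Fin m → ℝ | Monotone v} = ⋂ (i) (j) (_ : i ≤ j), {v | v i ≤ v j} := by
      ext v
      simp only [Set.mem_setOf_eq, Set.mem_iInter]
      exact ⟨fun h i j hij => h hij, fun h a b hab => h a b hab⟩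
    rw [this]
    exact MeasurableSet.iInter fun i => MeasurableSet.iInter fun j =>
      MeasurableSet.iInter fun _ => measurableSet_le (measurable_pi_apply i) (measurable_pi_apply j)
  exact h1.inter h2

variable {D : Measure (Fin m → ℝ)} [IsProbabilityMeasure D]

lemma ae_box (hS : D (box m H) = 1) (P : (Fin m → ℝ) → Prop) (h : ∀ v ∈ box m H, P v) : ∀ᵐ v ∂D, P v := by
  have hc : D (box m H)ᶜ = 0 := by
    have := measure_compl (measurableSet_box H (m := m)) (measure_ne_top D _)
    rw [hS] at this; simp [this]
  rw [ae_iff]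
  exact measure_mono_null (fun v hv => by
    simp only [Set.mem_setOf_eq] at hv
    exact fun hvS => hv (h v hvS)) hc

lemma revSel_le_H (hS : D (box m H) = 1) (hH : 0 < H) {M : Finset (Entry m)} (hM : IsMenu m M)
    {s} (hs : IsSelection M s) : revSel D s ≤ H := by
  rw [revSel]
  have hae : ∀ᵐ v ∂D, (s v).2 ≤ H := by
    apply ae_box H hS
    intro v hv
    have h0 : utility v (0, 0) ≤ utility v (s v) := (hs v).2 _ hM.1
    have hut : utility v ((0,0) : Entry m) = 0 := by simp [utility]
    have hlot := hM.2 _ (hs v).1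
    have hsum : ∑ j, v j * (s v).1 j ≤ H := by
      calc ∑ j, v j * (s v).1 j ≤ ∑ j, H * (s v).1 j := by
            apply Finset.sum_le_sum
            intro j _
            exact mul_le_mul_of_nonneg_right (hv.1 j).2 (hlot.1 j)
        _ = H * ∑ j, (s v).1 j := by rw [Finset.mul_sum]
        _ ≤ H * 1 := by exact mul_le_mul_of_nonneg_left hlot.2 (le_of_lt hH)
        _ = H := mul_one H
    rw [hut] at h0
    simp only [utility] at h0
    linarith
  by_cases hi : Integrable (fun v => (s v).2) D
  · calc ∫ v, (s v).2 ∂D ≤ ∫ _, H ∂D := integral_mono_ae hi (integrable_const H) hae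
      _ = H := by simp
  · rw [integral_undef hi]; exact le_of_lt hH

lemma Rev_le_OPT (hS : D (box m H) = 1) (hH : 0 < H) {M : Finset (Entry m)} (hM : IsMenu m M) :
    Rev D M ≤ OPT D := by
  apply le_csSup
  · refine ⟨H, fun r hr => ?_⟩
    obtain ⟨M', hM', rfl⟩ := hr
    apply Real.sSup_le _ (le_of_lt hH)
    rintro r ⟨s, hsel, rfl⟩
    exact revSel_le_H H hS hH hM' hsel
  · exact ⟨M, hM, rfl⟩
end


section
variable {m : ℕ} (H : ℝ) {D : Measure (Fin m → ℝ)} [IsProbabilityMeasure D]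

/-- single-item indicator lottery -/
def xI (j₀ : Fin m) : Fin m → ℝ := fun j => if j = j₀ then 1 else 0

lemma utility_xI (j₀ : Fin m) (v : Fin m → ℝ) (θ : ℝ) :
    utility v (xI j₀, θ) = v j₀ - θ := by
  simp only [utility, xI, mul_ite, mul_one, mul_zero]
  rw [Finset.sum_ite_eq' Finset.univ j₀ v]
  simp

lemma threshold_le_OPT (hS : D (box m H) = 1) (hH : 0 < H) (j₀ : Fin m) (θ : ℝ) :
    θ * (D {v | θ ≤ v j₀}).toReal ≤ OPT D := by
  classical
  set M : Finset (Entry m) := insert (0, 0) {(xI j₀, θ)} with hMdef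
  have hMenu : IsMenu m M := by
    constructor
    · exact Finset.mem_insert_self _ _
    · intro e he
      rcases Finset.mem_insert.1 he with rfl | he
      · exact ⟨fun j => le_rfl, by simp⟩
      · rw [Finset.mem_singleton] at he
        subst he
        refine ⟨fun j => by unfold xI; positivity, ?_⟩
        simp only [xI]
        rw [Finset.sum_ite_eq' Finset.univ j₀ (fun _ => (1:ℝ))]
        simp
  set s : (Fin m → ℝ) → Entry m := fun v => if θ ≤ v j₀ then (xI j₀, θ) else (0, 0) with hsdef
  have hsel : IsSelection M s := by
    intro v
    constructor
    · by_cases h : θ ≤ v j₀ <;> simp [hsdef, h, hMdef]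
    · intro e he
      have hu0 : utility v ((0,0) : Entry m) = 0 := by simp [utility]
      rcases Finset.mem_insert.1 he with rfl | he
      · by_cases h : θ ≤ v j₀ <;> simp only [hsdef, h, if_true, if_false, hu0, utility_xI] <;>
          [linarith; linarith]
      · rw [Finset.mem_singleton] at he; subst he
        by_cases h : θ ≤ v j₀ <;> simp only [hsdef, h, if_true, if_false, hu0, utility_xI] <;>
          [linarith; linarith]
  have hrev : revSel D s = θ * (D {v | θ ≤ v j₀}).toReal := by
    have hA : MeasurableSet {v : Fin m → ℝ | θ ≤ v j₀} :=
      measurableSet_le measurable_const (measurable_pi_apply j₀)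
    have : (fun v => (s v).2) = Set.indicator {v : Fin m → ℝ | θ ≤ v j₀} (fun _ => θ) := by
      funext v
      by_cases h : θ ≤ v j₀ <;> simp [hsdef, h, Set.indicator_apply, Set.mem_setOf_eq]
    rw [revSel, this, integral_indicator_const θ hA]
    simp [mul_comm]
    exact Or.inl rfl
  calc θ * (D {v | θ ≤ v j₀}).toReal = revSel D s := hrev.symm
    _ ≤ Rev D M := revSel_le_Rev D hMenu.1 hsel
    _ ≤ OPT D := Rev_le_OPT H hS hH hMenu

lemma one_le_OPT (hS : D (box m H) = 1) (hH : 0 < H) (hm : 0 < m) : 1 ≤ OPT D := by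
  have j₀ : Fin m := ⟨0, hm⟩
  have h := threshold_le_OPT H hS hH j₀ 1
  have hsub : box m H ⊆ {v | (1:ℝ) ≤ v j₀} := fun v hv => (hv.1 j₀).1
  have h1 : D {v | (1:ℝ) ≤ v j₀} = 1 :=
    le_antisymm prob_le_one (hS ▸ measure_mono hsub)
  rw [h1] at h
  simpa using h
end


section
variable (H : ℝ)

-- dyadic pointwise bound
lemma dyadic_pointwise (hH : 2 ≤ H) {x : ℝ} (hx1 : 1 ≤ x) (hxH : x ≤ H) :
    x ≤ 2 * ∑ k ∈ Finset.range (Nat.ceil (Real.logb 2 H) + 1),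
      (if (2:ℝ)^k ≤ x then (2:ℝ)^k else 0) := by
  set K := Nat.ceil (Real.logb 2 H)
  have hx0 : (0:ℝ) ≤ x := by linarith
  set n := Nat.floor x with hn
  have hn1 : 1 ≤ n := Nat.le_floor (by exact_mod_cast hx1)
  set j := Nat.log 2 n with hj
  have h2j : (2:ℝ)^j ≤ x := by
    have h1 : 2^j ≤ n := Nat.pow_log_le_self 2 (by omega)
    calc (2:ℝ)^j = ((2^j : ℕ) : ℝ) := by push_cast; ring
      _ ≤ (n : ℝ) := by exact_mod_cast h1
      _ ≤ x := Nat.floor_le hx0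
  have hxlt : x < (2:ℝ)^(j+1) := by
    have h2 : n < 2^(j+1) := Nat.lt_pow_succ_log_self (by omega) n
    have h3 : n + 1 ≤ 2^(j+1) := h2
    calc x < (n:ℝ) + 1 := Nat.lt_floor_add_one x
      _ ≤ ((2^(j+1) : ℕ) : ℝ) := by exact_mod_cast h3
      _ = (2:ℝ)^(j+1) := by push_cast; ring
  have hjK : j ∈ Finset.range (K + 1) := by
    have hHle : H ≤ (2:ℝ)^K := by
      have h1 : Real.logb 2 H ≤ (K : ℝ) := Nat.le_ceil _
      have h2 : (2:ℝ) ^ (Real.logb 2 H) ≤ (2:ℝ) ^ (K:ℝ) :=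
        Real.rpow_le_rpow_of_exponent_le one_le_two h1
      rwa [Real.rpow_logb (by norm_num) (by norm_num) (by linarith), Real.rpow_natCast] at h2
    have h4 : (2:ℝ)^j ≤ (2:ℝ)^K := h2j.trans (hxH.trans hHle)
    have h5 : j ≤ K := by
      exact_mod_cast Nat.pow_le_pow_iff_right (a := 2) (by norm_num) |>.1 (by exact_mod_cast h4)
    exact Finset.mem_range.2 (by omega)
  have hterm : (2:ℝ)^j ≤ ∑ k ∈ Finset.range (K + 1), (if (2:ℝ)^k ≤ x then (2:ℝ)^k else 0) := by
    have := Finset.single_le_sum (f := fun k => if (2:ℝ)^k ≤ x then (2:ℝ)^k else 0)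
      (fun k _ => by positivity) hjK
    simpa [h2j] using this
  have : (2:ℝ)^(j+1) = 2 * (2:ℝ)^j := by ring
  nlinarith
end


section
variable {m : ℕ} (H : ℝ) {D : Measure (Fin m → ℝ)} [IsProbabilityMeasure D]

lemma integrable_eval (hS : D (box m H) = 1) (j₀ : Fin m) :
    Integrable (fun v => v j₀) D := by
  apply Integrable.mono' (integrable_const H)
    (measurable_pi_apply j₀).aestronglyMeasurable
  apply ae_box H hS
  intro v hv
  rw [Real.norm_eq_abs, abs_le]
  have := hv.1 j₀
  constructor <;> [linarith [this.2, this.1]; exact this.2]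

lemma E_vmax_le (hS : D (box m H) = 1) (hH : 2 ≤ H) (hm : 0 < m) (j₀ : Fin m) :
    ∫ v, v j₀ ∂D ≤ 6 * Real.logb 2 H * OPT D := by
  classical
  set a := Real.logb 2 H with ha
  have ha1 : 1 ≤ a := by
    rw [ha]
    calc (1:ℝ) = Real.logb 2 2 := by simp
      _ ≤ Real.logb 2 H := Real.logb_le_logb_of_le one_lt_two zero_lt_two hH
  set K := Nat.ceil a with hK
  have hint_term : ∀ k, Integrable (fun v : Fin m → ℝ => if (2:ℝ)^k ≤ v j₀ then (2:ℝ)^k else 0) D := by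
    intro k
    have hA : MeasurableSet {v : Fin m → ℝ | (2:ℝ)^k ≤ v j₀} :=
      measurableSet_le measurable_const (measurable_pi_apply j₀)
    have : (fun v : Fin m → ℝ => if (2:ℝ)^k ≤ v j₀ then (2:ℝ)^k else 0)
        = Set.indicator {v : Fin m → ℝ | (2:ℝ)^k ≤ v j₀} (fun _ => (2:ℝ)^k) := by
      funext v; by_cases h : (2:ℝ)^k ≤ v j₀ <;> simp [h, Set.indicator_apply, Set.mem_setOf_eq]
    rw [this]
    exact (integrable_const _).indicator hA
  have hint_g : Integrable (fun v : Fin m → ℝ =>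
      ∑ k ∈ Finset.range (K+1), (if (2:ℝ)^k ≤ v j₀ then (2:ℝ)^k else 0)) D :=
    integrable_finset_sum _ (fun k _ => hint_term k)
  have step1 : ∫ v, v j₀ ∂D ≤ ∫ v, 2 * ∑ k ∈ Finset.range (K+1),
      (if (2:ℝ)^k ≤ v j₀ then (2:ℝ)^k else 0) ∂D := by
    apply integral_mono_ae (integrable_eval H hS j₀) (hint_g.const_mul 2)
    apply ae_box H hS
    intro v hv
    exact dyadic_pointwise H hH (hv.1 j₀).1 (hv.1 j₀).2
  have step2 : ∫ v, 2 * ∑ k ∈ Finset.range (K+1),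
      (if (2:ℝ)^k ≤ v j₀ then (2:ℝ)^k else 0) ∂D ≤ 2 * ((K:ℝ)+1) * OPT D := by
    rw [integral_const_mul, integral_finset_sum _ (fun k _ => hint_term k)]
    have hterm_le : ∀ k ∈ Finset.range (K+1),
        ∫ v, (if (2:ℝ)^k ≤ v j₀ then (2:ℝ)^k else 0) ∂D ≤ OPT D := by
      intro k _
      have hA : MeasurableSet {v : Fin m → ℝ | (2:ℝ)^k ≤ v j₀} :=
        measurableSet_le measurable_const (measurable_pi_apply j₀)
      have heq : (fun v : Fin m → ℝ => if (2:ℝ)^k ≤ v j₀ then (2:ℝ)^k else 0)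
          = Set.indicator {v : Fin m → ℝ | (2:ℝ)^k ≤ v j₀} (fun _ => (2:ℝ)^k) := by
        funext v; by_cases h : (2:ℝ)^k ≤ v j₀ <;> simp [h, Set.indicator_apply, Set.mem_setOf_eq]
      rw [heq, integral_indicator_const _ hA]
      have := threshold_le_OPT H hS (by linarith) j₀ ((2:ℝ)^k)
      simp only [smul_eq_mul, measureReal_def]
      linarith [this]
    calc 2 * ∑ k ∈ Finset.range (K+1), ∫ v, (if (2:ℝ)^k ≤ v j₀ then (2:ℝ)^k else 0) ∂D
        ≤ 2 * ∑ _k ∈ Finset.range (K+1), OPT D := by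
          have := Finset.sum_le_sum hterm_le
          linarith
      _ = 2 * ((K:ℝ)+1) * OPT D := by
          rw [Finset.sum_const, Finset.card_range]
          push_cast; ring
  have hOPT0 : 0 ≤ OPT D := le_trans zero_le_one (one_le_OPT H hS (by linarith) hm)
  have hK3 : 2*((K:ℝ)+1) ≤ 6 * a := by
    have h1 : (K:ℝ) < a + 1 := Nat.ceil_lt_add_one (by linarith)
    nlinarith
  calc ∫ v, v j₀ ∂D ≤ 2 * ((K:ℝ)+1) * OPT D := step1.trans step2
    _ ≤ 6 * a * OPT D := by nlinarith
end


/-- Core IC-transfer arithmetic lemma. -/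
lemma core_lemma {Ax Ay Bx By p q ε' δ : ℝ}
    (hε : 0 < ε') (hδ : 0 ≤ δ) (hδ1 : δ ≤ 1) (hBx : 0 ≤ Bx)
    (h1 : Ay - q ≤ Ax - p)
    (h2 : Bx - (1 - ε') * p ≤ By - (1 - ε') * q)
    (h3 : By ≤ (1 + δ) * Ay)
    (h4 : Ax ≤ (1 + δ) * Bx) :
    p - q ≤ 3 * δ / ε' * Bx := by
  have key : (δ + ε') * (p - q) ≤ (2*δ + δ^2) * Bx := by nlinarith
  rw [div_mul_eq_mul_div, le_div_iff₀ hε]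
  rcases le_or_gt (p - q) 0 with h | h
  · nlinarith [mul_nonneg (mul_nonneg hδ hδ) hBx, mul_nonneg hδ hBx]
  · nlinarith [mul_nonneg hδ h.le, mul_nonneg (mul_nonneg (by linarith : (0:ℝ) ≤ 1 - δ) hδ) hBx]


open Finset in
lemma monotone_count (m L : ℕ) :
    ((Finset.univ : Finset (Fin m → Fin L)).filter Monotone).card ≤ (m+1)^L := by
  classical
  have key : ∀ κ : Fin m → Fin L, Monotone κ → ∀ j k,
      (κ j ≤ k ↔ (j:ℕ) < (Finset.univ.filter (fun i => κ i ≤ k)).card) := by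
    intro κ hκ j k
    constructor
    · intro h
      have hsub : Finset.Iic j ⊆ Finset.univ.filter (fun i => κ i ≤ k) := by
        intro i hi
        rw [Finset.mem_Iic] at hi
        exact Finset.mem_filter.2 ⟨Finset.mem_univ _, le_trans (hκ hi) h⟩
      have := Finset.card_le_card hsub
      rw [Fin.card_Iic] at this
      omega
    · intro h
      by_contra hc
      have hsub : Finset.univ.filter (fun i => κ i ≤ k) ⊆ Finset.Iio j := by
        intro i hi
        rw [Finset.mem_filter] at hi
        rw [Finset.mem_Iio]
        by_contra hij
        exact hc (le_trans (hκ (not_lt.1 hij)) hi.2)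
      have := Finset.card_le_card hsub
      rw [Fin.card_Iio] at this
      omega
  have hinj : Set.InjOn (fun κ : Fin m → Fin L => fun k : Fin L =>
      (⟨(Finset.univ.filter (fun i => κ i ≤ k)).card, by
        have := Finset.card_le_card (Finset.filter_subset (fun i => κ i ≤ k) Finset.univ)
        simp at this; omega⟩ : Fin (m+1)))
      ((Finset.univ : Finset (Fin m → Fin L)).filter Monotone) := by
    intro κ₁ h₁ κ₂ h₂ heq
    rw [Finset.coe_filter] at h₁ h₂
    simp only [Set.mem_setOf_eq] at h₁ h₂
    funext j
    have e : ∀ k : Fin L, (Finset.univ.filter (fun i => κ₁ i ≤ k)).card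
        = (Finset.univ.filter (fun i => κ₂ i ≤ k)).card := by
      intro k
      have := congrFun heq k
      simpa using this
    have iff1 : ∀ k, κ₁ j ≤ k ↔ κ₂ j ≤ k := by
      intro k
      rw [key κ₁ h₁.2 j k, key κ₂ h₂.2 j k, e k]
    exact le_antisymm ((iff1 (κ₂ j)).2 le_rfl) ((iff1 (κ₁ j)).1 le_rfl)
  calc ((Finset.univ : Finset (Fin m → Fin L)).filter Monotone).card
      ≤ (Finset.univ : Finset (Fin L → Fin (m+1))).card :=
        Finset.card_le_card_of_injOn _ (fun a _ => Finset.mem_univ _) hinj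
    _ = (m+1)^L := by simp [Fintype.card_fun]


lemma half_le_log1p {δ : ℝ} (h0 : 0 < δ) (h1 : δ ≤ 1) : δ/2 ≤ Real.log (1+δ) := by
  have hpos : 0 < 1 + δ := by linarith
  have h2 : Real.log (1+δ)⁻¹ ≤ (1+δ)⁻¹ - 1 := Real.log_le_sub_one_of_pos (by positivity)
  rw [Real.log_inv] at h2
  have h3 : δ/(1+δ) ≤ Real.log (1+δ) := by
    have : (1+δ)⁻¹ - 1 = -(δ/(1+δ)) := by field_simp; ring
    rw [this] at h2
    linarith
  have h4 : δ/2 ≤ δ/(1+δ) := by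
    apply div_le_div_of_nonneg_left (le_of_lt h0) (by linarith) (by linarith)
  linarith

noncomputable def kd (δ x : ℝ) : ℕ := Nat.floor (Real.log x / Real.log (1+δ))

lemma log1p_pos {δ : ℝ} (hδ0 : 0 < δ) : 0 < Real.log (1+δ) := Real.log_pos (by linarith)

lemma pow_kd_le {δ : ℝ} (hδ0 : 0 < δ) {x : ℝ} (hx : 1 ≤ x) : (1+δ)^(kd δ x) ≤ x := by
  have hl := log1p_pos hδ0
  have harg : 0 ≤ Real.log x / Real.log (1+δ) := by
    apply div_nonneg (Real.log_nonneg hx) (le_of_lt hl)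
  have h1 : (kd δ x : ℝ) ≤ Real.log x / Real.log (1+δ) := Nat.floor_le harg
  have h2 : (kd δ x : ℝ) * Real.log (1+δ) ≤ Real.log x := by
    rw [← le_div_iff₀ hl]; exact h1
  have h3 : Real.log ((1+δ)^(kd δ x)) ≤ Real.log x := by
    rw [Real.log_pow]; exact h2
  have hxpos : (0:ℝ) < x := by linarith
  have hbpos : (0:ℝ) < (1+δ)^(kd δ x) := by positivity
  exact (Real.log_le_log_iff hbpos hxpos).1 h3

lemma le_mul_pow_kd {δ : ℝ} (hδ0 : 0 < δ) {x : ℝ} (hx : 1 ≤ x) :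
    x ≤ (1+δ) * (1+δ)^(kd δ x) := by
  have hl := log1p_pos hδ0
  have h1 : Real.log x / Real.log (1+δ) < (kd δ x : ℝ) + 1 := Nat.lt_floor_add_one _
  have h2 : Real.log x < ((kd δ x : ℝ) + 1) * Real.log (1+δ) := by
    rw [div_lt_iff₀ hl] at h1; linarith
  have h3 : Real.log x < Real.log ((1+δ)^(kd δ x + 1)) := by
    rw [Real.log_pow]; push_cast; linarith
  have h4 : x < (1+δ)^(kd δ x + 1) :=
    (Real.log_lt_log_iff (by linarith) (by positivity)).1 h3
  calc x ≤ (1+δ)^(kd δ x + 1) := le_of_lt h4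
    _ = (1+δ) * (1+δ)^(kd δ x) := by ring

lemma kd_mono {δ : ℝ} (hδ0 : 0 < δ) {x y : ℝ} (hx : 1 ≤ x) (hxy : x ≤ y) :
    kd δ x ≤ kd δ y := by
  apply Nat.floor_le_floor
  have hlog : Real.log x ≤ Real.log y := (Real.log_le_log_iff (by linarith) (by linarith)).2 hxy
  exact div_le_div_of_nonneg_right hlog (le_of_lt (log1p_pos hδ0))

lemma kd_le_of_le {δ : ℝ} (hδ0 : 0 < δ) {x H : ℝ} {L : ℕ} (hx : 1 ≤ x) (hxH : x ≤ H)
    (hcov : H ≤ (1+δ)^(L-1)) : kd δ x ≤ L - 1 := by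
  have h1 : (1+δ)^(kd δ x) ≤ (1+δ)^(L-1) := le_trans (pow_kd_le hδ0 hx) (le_trans hxH hcov)
  exact (pow_le_pow_iff_right₀ (by linarith : (1:ℝ) < 1+δ)).1 h1

lemma cover_pow {δ : ℝ} (hδ0 : 0 < δ) {H : ℝ} (hH : 1 ≤ H) (hδ1 : δ ≤ 1) :
    H ≤ (1+δ)^(Nat.floor (2*Real.log H/δ) + 1) := by
  set n := Nat.floor (2*Real.log H/δ) + 1 with hn
  have hl2 := half_le_log1p hδ0 hδ1
  have h1 : 2*Real.log H/δ ≤ (n:ℝ) := by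
    have := Nat.lt_floor_add_one (2*Real.log H/δ)
    push_cast [hn]; linarith
  have h2 : Real.log H ≤ (n:ℝ) * (δ/2) := by
    rw [div_le_iff₀ hδ0] at h1; nlinarith
  have h3 : Real.log H ≤ (n:ℝ) * Real.log (1+δ) := by
    have hn0 : (0:ℝ) ≤ n := Nat.cast_nonneg n
    nlinarith
  have h4 : Real.log H ≤ Real.log ((1+δ)^n) := by rw [Real.log_pow]; exact h3
  have hppos : (0:ℝ) < (1+δ)^n := by positivity
  exact (Real.log_le_log_iff (by linarith) hppos).1 h4
set_option maxHeartbeats 1000000 in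
/-- **Theorem 2 (monotone case).** There is a universal constant `c > 0` such that for every
`m ≥ 2`, `H ≥ 2`, `ε ∈ (0, 1/2)` and every distribution `D` supported on the monotone
valuations in `[1, H]^m`, there is a menu with at most
`m^(c·((log₂ H)³ + (log₂(1/ε))²)/ε²)` entries whose revenue is at least a `(1 - ε)` fraction
of the optimal revenue. -/
theorem menu_size_monotone :
    ∃ c : ℝ, 0 < c ∧
      ∀ (m : ℕ), 2 ≤ m → ∀ H : ℝ, 2 ≤ H → ∀ ε : ℝ, 0 < ε → ε < 1 / 2 →
        ∀ D : Measure (Fin m → ℝ), IsProbabilityMeasure D →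
          D {v | (∀ j, v j ∈ Set.Icc (1 : ℝ) H) ∧ Monotone v} = 1 →
          ∃ M : Finset (Entry m), IsMenu m M ∧
            (M.card : ℝ) ≤
              (m : ℝ) ^ (c * ((Real.logb 2 H) ^ 3 + (Real.logb 2 (1 / ε)) ^ 2) / ε ^ 2) ∧
            (1 - ε) * OPT D ≤ Rev D M := by
  classical
  refine ⟨3000, by norm_num, ?_⟩
  intro m hm H hH ε hε hε2 D hD hS
  have hS' : D (box m H) = 1 := hS
  have hm0 : 0 < m := by omega
  have hHpos : (0:ℝ) < H := by linarith
  set j₀ : Fin m := ⟨m-1, by omega⟩ with hj₀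
  set a := Real.logb 2 H with ha
  have ha1 : 1 ≤ a := by
    rw [ha]
    calc (1:ℝ) = Real.logb 2 2 := by simp
      _ ≤ Real.logb 2 H := Real.logb_le_logb_of_le one_lt_two zero_lt_two hH
  set ε' : ℝ := ε/4 with hε'def
  have hε'pos : 0 < ε' := by rw [hε'def]; linarith
  have hε'le : ε' ≤ 1/8 := by rw [hε'def]; linarith
  set δ : ℝ := ε'^2/(36*a) with hδdef
  have hδ0 : 0 < δ := by rw [hδdef]; positivity
  have hδ1 : δ ≤ 1 := by
    rw [hδdef]
    rw [div_le_one (by positivity)]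
    nlinarith
  set L : ℕ := Nat.floor (2*Real.log H/δ) + 2 with hLdef
  have hcov : H ≤ (1+δ)^(L-1) := by
    have := cover_pow hδ0 (by linarith : (1:ℝ) ≤ H) hδ1
    simpa [hLdef] using this
  set O := OPT D with hO
  have hO1 : 1 ≤ O := one_le_OPT H hS' hHpos hm0
  have hOPTne : Set.Nonempty {r | ∃ M : Finset (Entry m), IsMenu m M ∧ r = Rev D M} := by
    refine ⟨Rev D {((0,0) : Entry m)}, {((0,0) : Entry m)}, ?_, rfl⟩
    constructor
    · exact Finset.mem_singleton_self _
    · intro e he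
      rw [Finset.mem_singleton] at he; subst he
      exact ⟨fun j => le_rfl, by simp⟩
  obtain ⟨r1, hr1mem, hr1⟩ := exists_lt_of_lt_csSup hOPTne
    (show O - ε'/4 < O by linarith)
  obtain ⟨M₁, hM₁, rfl⟩ := hr1mem
  have hrevne : Set.Nonempty {r | ∃ s, IsSelection M₁ s ∧ r = revSel D s} :=
    ⟨revSel D (sel M₁), sel M₁, sel_isSelection hM₁.1, rfl⟩
  obtain ⟨r2, hr2mem, hr2⟩ := exists_lt_of_lt_csSup hrevne
    (show Rev D M₁ - ε'/4 < Rev D M₁ by linarith)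
  obtain ⟨s₁, hs₁, rfl⟩ := hr2mem
  have hs₁rev : O - ε'/2 ≤ revSel D s₁ := by linarith
  have hint₁ : Integrable (fun v => (s₁ v).2) D := by
    by_contra hni
    have : revSel D s₁ = 0 := by rw [revSel, integral_undef hni]
    rw [this] at hs₁rev
    linarith
  -- scaled near-optimal menu
  set M₁' : Finset (Entry m) := M₁.image (fun e : Entry m => (e.1, (1-ε')*e.2)) with hM₁'def
  have hM₁'menu : IsMenu m M₁' := by
    constructor
    · refine Finset.mem_image.2 ⟨(0,0), hM₁.1, by simp⟩
    · intro e he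
      obtain ⟨e₀, he₀, rfl⟩ := Finset.mem_image.1 he
      exact hM₁.2 e₀ he₀
  set s₂ := sel M₁' with hs₂def
  have hs₂ : IsSelection M₁' s₂ := sel_isSelection hM₁'menu.1
  -- the grid menu
  set W : Finset (Fin m → ℝ) :=
    (Finset.univ.filter (fun κ : Fin m → Fin L => Monotone κ)).image
      (fun κ => fun j => (1+δ)^((κ j : ℕ))) with hWdef
  set F : (Fin m → ℝ) → Entry m := fun w => ((s₂ w).1, (1-ε') * (s₂ w).2) with hFdef
  set M : Finset (Entry m) := insert ((0,0) : Entry m) (W.image F) with hMdef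
  have hMenu : IsMenu m M := by
    constructor
    · exact Finset.mem_insert_self _ _
    · intro e he
      rcases Finset.mem_insert.1 he with rfl | he
      · exact ⟨fun j => le_rfl, by simp⟩
      · obtain ⟨w, _, rfl⟩ := Finset.mem_image.1 he
        exact hM₁'menu.2 (s₂ w) (hs₂ w).1
  refine ⟨M, hMenu, ?_, ?_⟩
  · -- cardinality bound
    have hcard1 : M.card ≤ W.card + 1 := by
      calc M.card ≤ (W.image F).card + 1 := Finset.card_insert_le _ _
        _ ≤ W.card + 1 := by
            have := Finset.card_image_le (s := W) (f := F)
            omega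
    have hcard2 : W.card ≤ (m+1)^L := by
      calc W.card ≤ ((Finset.univ : Finset (Fin m → Fin L)).filter Monotone).card :=
            Finset.card_image_le
        _ ≤ (m+1)^L := monotone_count m L
    have hnat : (m+1)^L + 1 ≤ m^(2*L+1) := by
      have h1 : (m+1)^L ≤ m^(2*L) := by
        have hmm : (m+1)^L ≤ (m^2)^L := Nat.pow_le_pow_left (by nlinarith) L
        rwa [← pow_mul] at hmm
      have h2 : 1 ≤ m^(2*L) := Nat.one_le_pow _ _ (by omega)
      have h3 : m^(2*L+1) = m^(2*L) * m := pow_succ m (2*L)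
      nlinarith
    have hcast : (M.card : ℝ) ≤ ((m:ℝ))^((2*L+1 : ℕ):ℝ) := by
      rw [Real.rpow_natCast]
      have : M.card ≤ m^(2*L+1) := by omega
      exact_mod_cast this
    refine hcast.trans ?_
    apply Real.rpow_le_rpow_of_exponent_le (by exact_mod_cast hm.trans' (by norm_num))
    -- exponent bound
    have hε2pos : (0:ℝ) < ε^2 := by positivity
    have hlogHnn : 0 ≤ Real.log H := Real.log_nonneg (by linarith)
    have hlogH : Real.log H ≤ a := by
      have hl2 : Real.log 2 ≤ 1 := by
        have := Real.log_le_sub_one_of_pos (by norm_num : (0:ℝ) < 2)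
        linarith
      have hl2pos : 0 < Real.log 2 := Real.log_pos (by norm_num)
      rw [ha, Real.logb, le_div_iff₀ hl2pos]
      nlinarith
    have hLle : (L:ℝ) ≤ 2*Real.log H/δ + 2 := by
      have hfl : (Nat.floor (2*Real.log H/δ) : ℝ) ≤ 2*Real.log H/δ :=
        Nat.floor_le (div_nonneg (by linarith) hδ0.le)
      rw [hLdef]
      push_cast
      linarith
    have hane : a ≠ 0 := by linarith
    have hεne : ε ≠ 0 := ne_of_gt hε
    have hdiv : 2*Real.log H/δ = 1152*a*Real.log H/ε^2 := by
      rw [hδdef, hε'def]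
      field_simp
      ring
    have hLε : (L:ℝ)*ε^2 ≤ 1152*a*Real.log H + 2*ε^2 := by
      have h1 : (L:ℝ) ≤ 1152*a*Real.log H/ε^2 + 2 := by rw [← hdiv]; exact hLle
      have h2 : (L:ℝ)*ε^2 ≤ (1152*a*Real.log H/ε^2 + 2)*ε^2 :=
        mul_le_mul_of_nonneg_right h1 (le_of_lt hε2pos)
      have h3 : 1152*a*Real.log H/ε^2*ε^2 = 1152*a*Real.log H :=
        div_mul_cancel₀ _ (ne_of_gt hε2pos)
      nlinarith
    have hb2 : 0 ≤ (Real.logb 2 (1/ε))^2 := sq_nonneg _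
    rw [div_eq_mul_inv, ← div_eq_mul_inv, le_div_iff₀ hε2pos]
    have hLcast : ((2*L+1 : ℕ):ℝ) = 2*(L:ℝ)+1 := by push_cast; ring
    rw [hLcast]
    have key1 : 1152*a*Real.log H ≤ 1152*a*a :=
      mul_le_mul_of_nonneg_left hlogH (by linarith)
    have key2 : a*a ≤ a*a*a := by nlinarith
    have ha3 : a^3 = a*a*a := by ring
    have hεsm : ε^2 ≤ 1 := by nlinarith
    nlinarith [sq_nonneg a, hLε, hb2]
  · -- revenue bound
    have hvtop : ∀ v ∈ box m H, ∀ (x : Fin m → ℝ), IsLottery m x → ∑ j, v j * x j ≤ v j₀ := by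
      intro v hv x hx
      have hj₀top : ∀ j : Fin m, v j ≤ v j₀ := by
        intro j
        apply hv.2
        show j ≤ j₀
        rw [Fin.le_def]
        have := j.isLt
        simp only [hj₀]
        omega
      have hv0 : (0:ℝ) ≤ v j₀ := le_trans zero_le_one (hv.1 j₀).1
      calc ∑ j, v j * x j ≤ ∑ j, v j₀ * x j :=
            Finset.sum_le_sum (fun j _ => mul_le_mul_of_nonneg_right (hj₀top j) (hx.1 j))
        _ = v j₀ * ∑ j, x j := by rw [Finset.mul_sum]
        _ ≤ v j₀ * 1 := mul_le_mul_of_nonneg_left hx.2 hv0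
        _ = v j₀ := mul_one _
    have hround : ∀ v ∈ box m H, ∃ w ∈ W,
        ∀ j : Fin m, w j ≤ v j ∧ v j ≤ (1+δ) * w j ∧ 0 < w j := by
      intro v hv
      have hkdle : ∀ j, kd δ (v j) ≤ L - 1 := fun j =>
        kd_le_of_le hδ0 (hv.1 j).1 (hv.1 j).2 hcov
      refine ⟨fun j => (1+δ)^(kd δ (v j)), ?_, ?_⟩
      · rw [hWdef]
        refine Finset.mem_image.2
          ⟨fun j => (⟨kd δ (v j), by have := hkdle j; omega⟩ : Fin L), ?_, rfl⟩
        refine Finset.mem_filter.2 ⟨Finset.mem_univ _, ?_⟩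
        intro i j hij
        exact Fin.mk_le_mk.2 (kd_mono hδ0 (hv.1 i).1 (hv.2 hij))
      · intro j
        exact ⟨pow_kd_le hδ0 (hv.1 j).1, le_mul_pow_kd hδ0 (hv.1 j).1, by positivity⟩
    have hpoint : ∀ v ∈ box m H,
        (1-ε')^2*(s₁ v).2 - 6*δ/ε'*(v j₀) ≤ (sel M v).2 := by
      intro v hv
      obtain ⟨w, hwW, hsand⟩ := hround v hv
      have hwv : ∀ (x : Fin m → ℝ), (∀ j, 0 ≤ x j) → ∑ j, w j * x j ≤ ∑ j, v j * x j :=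
        fun x hx => Finset.sum_le_sum (fun j _ => mul_le_mul_of_nonneg_right (hsand j).1 (hx j))
      have hvw : ∀ (x : Fin m → ℝ), (∀ j, 0 ≤ x j) →
          ∑ j, v j * x j ≤ (1+δ) * ∑ j, w j * x j := by
        intro x hx
        rw [Finset.mul_sum]
        apply Finset.sum_le_sum
        intro j _
        calc v j * x j ≤ ((1+δ) * w j) * x j :=
              mul_le_mul_of_nonneg_right (hsand j).2.1 (hx j)
          _ = (1+δ) * (w j * x j) := by ring
      have hwnn : ∀ (x : Fin m → ℝ), (∀ j, 0 ≤ x j) → 0 ≤ ∑ j, w j * x j :=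
        fun x hx => Finset.sum_nonneg (fun j _ => mul_nonneg (le_of_lt (hsand j).2.2) (hx j))
      have hv1 : ∀ j, (0:ℝ) ≤ v j := fun j => le_trans zero_le_one (hv.1 j).1
      have hvnn : ∀ (x : Fin m → ℝ), (∀ j, 0 ≤ x j) → 0 ≤ ∑ j, v j * x j :=
        fun x hx => Finset.sum_nonneg (fun j _ => mul_nonneg (hv1 j) (hx j))
      obtain ⟨e₀, he₀, he₀eq⟩ := Finset.mem_image.1 ((hs₂ w).1)
      obtain ⟨e₂, he₂, he₂eq⟩ : ∃ e₂, e₂ ∈ M₁' ∧ sel M v = (e₂.1, (1-ε')*e₂.2) := by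
        rcases Finset.mem_insert.1 (sel_mem hMenu.1 v) with h | h
        · exact ⟨(0,0), hM₁'menu.1, by rw [h]; simp⟩
        · obtain ⟨w', _, hw'eq⟩ := Finset.mem_image.1 h
          exact ⟨s₂ w', (hs₂ w').1, hw'eq.symm⟩
      have hl₁ : IsLottery m (s₁ v).1 := hM₁.2 _ (hs₁ v).1
      have hl₀ : IsLottery m e₀.1 := hM₁.2 _ he₀
      have hl₂ : IsLottery m e₂.1 := hM₁'menu.2 _ he₂
      have hB : (s₁ v).2 - e₀.2 ≤ 3*δ/ε' * (∑ j, w j * (s₁ v).1 j) := by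
        refine core_lemma (Ax := ∑ j, v j * (s₁ v).1 j) (Ay := ∑ j, v j * e₀.1 j)
          (By := ∑ j, w j * e₀.1 j)
          hε'pos hδ0.le hδ1 (hwnn _ hl₁.1) ?_ ?_ ?_ ?_
        · have := (hs₁ v).2 e₀ he₀
          simp only [utility] at this
          linarith
        · have hmem : ((s₁ v).1, (1-ε')*(s₁ v).2) ∈ M₁' := by
            rw [hM₁'def]
            exact Finset.mem_image_of_mem _ (hs₁ v).1
          have hic := (hs₂ w).2 _ hmem
          rw [← he₀eq] at hic
          simp only [utility] at hic
          linarith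
        · have h1 := hwv e₀.1 hl₀.1
          have h2 := hvnn e₀.1 hl₀.1
          nlinarith [hδ0.le]
        · exact hvw _ hl₁.1
      have hA : (1-ε')*e₀.2 - e₂.2 ≤ 3*δ/ε' * (∑ j, v j * e₀.1 j) := by
        refine core_lemma (Ax := ∑ j, w j * e₀.1 j) (Ay := ∑ j, w j * e₂.1 j)
          (By := ∑ j, v j * e₂.1 j)
          hε'pos hδ0.le hδ1 (hvnn _ hl₀.1) ?_ ?_ ?_ ?_
        · have hic := (hs₂ w).2 e₂ he₂
          rw [← he₀eq] at hic
          simp only [utility] at hic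
          linarith
        · have hmemFw : F w ∈ M := by
            rw [hMdef]
            exact Finset.mem_insert_of_mem (Finset.mem_image_of_mem F hwW)
          have hut := le_utility_pickL M.toList v (F w) (Finset.mem_toList.2 hmemFw)
          have hpe : pickL M.toList v = sel M v := rfl
          rw [hpe, he₂eq] at hut
          have hFw : F w = (e₀.1, (1-ε')*((1-ε')*e₀.2)) := by
            simp only [hFdef]
            rw [← he₀eq]
          rw [hFw] at hut
          simp only [utility] at hut
          linarith
        · exact hvw _ hl₂.1
        · have h1 := hwv e₀.1 hl₀.1
          have h2 := hvnn e₀.1 hl₀.1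
          nlinarith [hδ0.le]
      have hd1 : ∑ j, w j * (s₁ v).1 j ≤ v j₀ := le_trans (hwv _ hl₁.1) (hvtop v hv _ hl₁)
      have hd2 : ∑ j, v j * e₀.1 j ≤ v j₀ := hvtop v hv _ hl₀
      have hvj0 : (1:ℝ) ≤ v j₀ := (hv.1 j₀).1
      have hcnn : (0:ℝ) ≤ 3*δ/ε' := by positivity
      set cc : ℝ := 3*δ/ε'*(v j₀) with hccdef
      have hcc : 0 ≤ cc := mul_nonneg hcnn (by linarith)
      have hB' : (s₁ v).2 - e₀.2 ≤ cc :=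
        le_trans hB (mul_le_mul_of_nonneg_left hd1 hcnn)
      have hA' : (1-ε')*e₀.2 - e₂.2 ≤ cc :=
        le_trans hA (mul_le_mul_of_nonneg_left hd2 hcnn)
      have hselv : (sel M v).2 = (1-ε')*e₂.2 := by rw [he₂eq]
      rw [hselv]
      have h6cc : 6*δ/ε'*(v j₀) = 2*cc := by rw [hccdef]; ring
      rw [h6cc]
      have hε'1 : (0:ℝ) ≤ 1-ε' := by linarith
      have t1 := mul_le_mul_of_nonneg_left hA' hε'1
      have t2 := mul_le_mul_of_nonneg_left hB' (sq_nonneg (1-ε'))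
      nlinarith [mul_nonneg hε'1 hcc, mul_nonneg (mul_nonneg hε'1 hε'1) hcc]
    -- integrate the pointwise bound
    obtain ⟨B, hB0, hBle⟩ := exists_priceBound M hMenu.1
    have hmeass : Measurable (fun v => (sel M v).2) := (measurable_pickL M.toList).1
    have hint_f : Integrable (fun v => (sel M v).2) D := by
      apply Integrable.mono' (integrable_const B) hmeass.aestronglyMeasurable
      apply ae_of_all
      intro v
      have := hBle _ (sel_mem hMenu.1 v)
      rw [Real.norm_eq_abs, abs_le]
      exact ⟨this.2, this.1⟩
    have hint_v : Integrable (fun v => v j₀) D := integrable_eval H hS' j₀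
    have hint_g : Integrable (fun v => (1-ε')^2*(s₁ v).2 - 6*δ/ε'*(v j₀)) D :=
      (hint₁.const_mul _).sub (hint_v.const_mul _)
    have hmono : ∫ v, ((1-ε')^2*(s₁ v).2 - 6*δ/ε'*(v j₀)) ∂D ≤ ∫ v, (sel M v).2 ∂D :=
      integral_mono_ae hint_g hint_f (ae_box H hS' _ hpoint)
    have hsplit : ∫ v, ((1-ε')^2*(s₁ v).2 - 6*δ/ε'*(v j₀)) ∂D
        = (1-ε')^2 * revSel D s₁ - 6*δ/ε' * ∫ v, v j₀ ∂D := by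
      rw [integral_sub (hint₁.const_mul _) (hint_v.const_mul _),
        integral_const_mul, integral_const_mul, revSel]
    have hEv : ∫ v, v j₀ ∂D ≤ 6*a*O := E_vmax_le H hS' hH hm0 j₀
    have hcoef : 6*δ/ε' * (6*a*O) = ε' * O := by
      rw [hδdef]
      field_simp
      ring
    have h6le : 6*δ/ε' * ∫ v, v j₀ ∂D ≤ ε' * O := by
      calc 6*δ/ε' * ∫ v, v j₀ ∂D ≤ 6*δ/ε' * (6*a*O) :=
            mul_le_mul_of_nonneg_left hEv (by positivity)
        _ = ε' * O := hcoef
    have hrevM : (1-ε)*O ≤ revSel D (sel M) := by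
      have h1 : (1-ε')^2 * (O - ε'/2) ≤ (1-ε')^2 * revSel D s₁ :=
        mul_le_mul_of_nonneg_left hs₁rev (sq_nonneg _)
      have h2 : revSel D (sel M) = ∫ v, (sel M v).2 ∂D := rfl
      rw [h2, hε'def] at *
      nlinarith [hmono, hsplit, h6le, h1, hO1, hε, hε2, sub_nonneg.2 hO1,
        mul_nonneg hε.le (sub_nonneg.2 hO1),
        mul_nonneg (mul_nonneg hε.le hε.le) (sub_nonneg.2 hO1),
        mul_pos hε hε, sq_nonneg ε]
    calc (1-ε)*O ≤ revSel D (sel M) := hrevM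
      _ ≤ Rev D M := revSel_le_Rev D hMenu.1 (sel_isSelection hMenu.1)
end

section
/- For every integer m ≥ 1, every real H ≥ 2, and every probability distribution D supported on [1, H]^m, there exists an integer k with 0 ≤ k ≤ ⌈log₂ H⌉ such that the menu M_p = {(0, 0)} ∪ {(e_j, p) : 1 ≤ j ≤ m} with uniform price p = 2^k (where e_j denotes the j-th standard basis vector of ℝ^m) satisfies Rev_D(M_p) ≥ OPT(D) / (2(⌈log₂ H⌉ + 1)). In particular, a menu with at most m entries besides the null entry extracts an Ω(1/log H) fraction of the optimal revenue. -/
open MeasureTheory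

/-- **Proposition 3.** For every `m ≥ 1`, `H ≥ 2`, and every distribution `D` supported on
`[1, H]^m`, some uniform-price menu with price a power of two `2^k`, `0 ≤ k ≤ ⌈log₂ H⌉`
(selling each item `j` via the entry `(e_j, 2^k)`), extracts at least a
`1/(2(⌈log₂ H⌉ + 1))` fraction of the optimal revenue; it has at most `m` entries besides
the null entry. -/
theorem uniform_price_log_approx :
    ∀ (m : ℕ), 1 ≤ m → ∀ H : ℝ, 2 ≤ H →
      ∀ D : Measure (Fin m → ℝ), IsProbabilityMeasure D →
        D {v | ∀ j, v j ∈ Set.Icc (1 : ℝ) H} = 1 →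
        ∃ k : ℕ, k ≤ ⌈Real.logb 2 H⌉₊ ∧
          (let M : Finset (Entry m) :=
            insert (0, 0)
              (Finset.univ.image fun j : Fin m => (Pi.single j (1 : ℝ), (2 : ℝ) ^ k));
          IsMenu m M ∧ M.card ≤ m + 1 ∧
            OPT D / (2 * ((⌈Real.logb 2 H⌉₊ : ℝ) + 1)) ≤ Rev D M) := by
  classical
  intro m hm H hH D hD hsupp
  haveI : Nonempty (Fin m) := ⟨⟨0, hm⟩⟩
  have hne : (Finset.univ : Finset (Fin m)).Nonempty := Finset.univ_nonempty
  set K : ℕ := ⌈Real.logb 2 H⌉₊ with hKdef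
  set mx : (Fin m → ℝ) → ℝ := fun v => Finset.univ.sup' hne (fun j => v j) with hmxdef
  have hmx_meas : Measurable mx := by
    have h := Finset.measurable_sup' hne
      (f := fun (j : Fin m) (v : Fin m → ℝ) => v j) (fun j _ => measurable_pi_apply j)
    have heq : mx = Finset.univ.sup' hne (fun (j : Fin m) (v : Fin m → ℝ) => v j) := by
      funext v; rw [hmxdef, Finset.sup'_apply]
    rw [heq]; exact h
  have hvle : ∀ (v : Fin m → ℝ) (j : Fin m), v j ≤ mx v := fun v j =>
    Finset.le_sup' (fun j => v j) (Finset.mem_univ j)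
  set B : Set (Fin m → ℝ) := {v | ∀ j, v j ∈ Set.Icc (1:ℝ) H} with hBdef
  have hBmeas : MeasurableSet B := by
    have heq : B = ⋂ j, (fun v : Fin m → ℝ => v j) ⁻¹' Set.Icc 1 H := by
      ext v; simp [hBdef, Set.mem_iInter]
    rw [heq]
    exact MeasurableSet.iInter fun j => (measurable_pi_apply j) measurableSet_Icc
  have hae : ∀ᵐ v ∂D, v ∈ B := by
    rw [ae_iff]
    have h := measure_compl hBmeas (measure_ne_top D B)
    rw [hsupp, measure_univ, tsub_self] at h
    exact h
  have h1mx : ∀ v ∈ B, (1:ℝ) ≤ mx v := by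
    intro v hv
    exact le_trans (hv ⟨0, hm⟩).1 (hvle v _)
  have hmxH : ∀ v ∈ B, mx v ≤ H := by
    intro v hv
    exact Finset.sup'_le hne _ fun j _ => (hv j).2
  have hHK : H ≤ (2:ℝ) ^ K := by
    have h1 : Real.logb 2 H ≤ (K : ℝ) := Nat.le_ceil _
    calc H = (2:ℝ) ^ Real.logb 2 H :=
          (Real.rpow_logb (by norm_num) (by norm_num) (by linarith)).symm
      _ ≤ (2:ℝ) ^ (K : ℝ) := Real.rpow_le_rpow_of_exponent_le (by norm_num) h1
      _ = (2:ℝ) ^ K := by rw [Real.rpow_natCast]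
  set A : ℕ → Set (Fin m → ℝ) := fun k => {v | (2:ℝ)^k ≤ mx v} with hAdef
  have hA_meas : ∀ k, MeasurableSet (A k) := fun k =>
    measurableSet_le measurable_const hmx_meas
  have hmx_int : Integrable mx D := by
    refine Integrable.mono' (integrable_const H) hmx_meas.aestronglyMeasurable ?_
    filter_upwards [hae] with v hv
    rw [Real.norm_eq_abs, abs_le]
    exact ⟨by linarith [h1mx v hv], hmxH v hv⟩
  -- pointwise domination
  have hpt : ∀ v ∈ B,
      mx v ≤ 2 * ∑ k ∈ Finset.range (K+1), (A k).indicator (fun _ => (2:ℝ)^k) v := by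
    intro v hv
    set T : Finset ℕ := (Finset.range (K+1)).filter (fun k => (2:ℝ)^k ≤ mx v) with hTdef
    have hT0 : 0 ∈ T := by
      rw [hTdef, Finset.mem_filter, Finset.mem_range]
      exact ⟨Nat.succ_pos _, by simpa using h1mx v hv⟩
    have hTne : T.Nonempty := ⟨0, hT0⟩
    set t : ℕ := T.max' hTne with htdef
    have htT : t ∈ T := T.max'_mem hTne
    have htK : t ≤ K := Nat.lt_succ_iff.mp (Finset.mem_range.mp (Finset.mem_filter.mp htT).1)
    have ht1 : (2:ℝ)^t ≤ mx v := (Finset.mem_filter.mp htT).2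
    have ht2 : mx v ≤ (2:ℝ)^(t+1) := by
      rcases eq_or_lt_of_le htK with hEq | hlt
      · calc mx v ≤ H := hmxH v hv
          _ ≤ (2:ℝ)^K := hHK
          _ ≤ (2:ℝ)^(t+1) := by
              apply pow_le_pow_right₀ (by norm_num : (1:ℝ) ≤ 2); omega
      · by_contra hc
        push_neg at hc
        have hmem : t+1 ∈ T := by
          rw [hTdef, Finset.mem_filter, Finset.mem_range]
          exact ⟨by omega, le_of_lt hc⟩
        have := Finset.le_max' T (t+1) hmem
        omega
    have hterm : ∀ k ∈ Finset.range (t+1), (2:ℝ)^k = (A k).indicator (fun _ => (2:ℝ)^k) v := by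
      intro k hk
      have hk' : v ∈ A k := by
        show (2:ℝ)^k ≤ mx v
        refine le_trans ?_ ht1
        apply pow_le_pow_right₀ (by norm_num : (1:ℝ) ≤ 2)
        exact Nat.lt_succ_iff.mp (Finset.mem_range.mp hk)
      rw [Set.indicator_of_mem hk']
    have hsum1 : ∑ k ∈ Finset.range (t+1), (2:ℝ)^k
        ≤ ∑ k ∈ Finset.range (K+1), (A k).indicator (fun _ => (2:ℝ)^k) v := by
      rw [Finset.sum_congr rfl hterm]
      refine Finset.sum_le_sum_of_subset_of_nonneg
        (Finset.range_subset_range.mpr (by omega)) ?_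
      intro k _ _
      exact Set.indicator_nonneg (fun _ _ => by positivity) v
    have hgeo : ∑ k ∈ Finset.range (t+1), (2:ℝ)^k = 2^(t+1) - 1 := by
      rw [geom_sum_eq (by norm_num : (2:ℝ) ≠ 1)]; ring
    have h2t : (2:ℝ) ≤ 2^(t+1) := by
      calc (2:ℝ) = 2^1 := (pow_one 2).symm
        _ ≤ 2^(t+1) := by apply pow_le_pow_right₀ (by norm_num : (1:ℝ) ≤ 2); omega
    linarith
  -- integral bound
  have hind_int : ∀ k ∈ Finset.range (K+1),
      Integrable ((A k).indicator (fun _ => (2:ℝ)^k)) D :=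
    fun k _ => (integrable_const _).indicator (hA_meas k)
  have hEint : ∫ v, mx v ∂D ≤ 2 * ∑ k ∈ Finset.range (K+1), (2:ℝ)^k * (D (A k)).toReal := by
    have hg_int : Integrable
        (fun v => 2 * ∑ k ∈ Finset.range (K+1), (A k).indicator (fun _ => (2:ℝ)^k) v) D := by
      have := integrable_finset_sum (μ := D) (Finset.range (K+1)) hind_int
      exact this.const_mul 2
    have h1 : ∫ v, mx v ∂D
        ≤ ∫ v, 2 * ∑ k ∈ Finset.range (K+1), (A k).indicator (fun _ => (2:ℝ)^k) v ∂D := by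
      refine integral_mono_ae hmx_int hg_int ?_
      filter_upwards [hae] with v hv using hpt v hv
    refine le_trans h1 (le_of_eq ?_)
    rw [integral_const_mul, integral_finset_sum _ hind_int]
    congr 1
    refine Finset.sum_congr rfl fun k _ => ?_
    rw [integral_indicator_const _ (hA_meas k), smul_eq_mul, mul_comm]
    rfl
  have hE_nonneg : 0 ≤ ∫ v, mx v ∂D :=
    integral_nonneg_of_ae (by
      filter_upwards [hae] with v hv
      show (0:ℝ) ≤ mx v
      linarith [h1mx v hv])
  -- revenue of any menu is at most E[max]
  have hrev_le : ∀ (M : Finset (Entry m)), IsMenu m M →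
      ∀ s, IsSelection M s → revSel D s ≤ ∫ v, mx v ∂D := by
    intro M hM s hs
    by_cases hint : Integrable (fun v => (s v).2) D
    · refine integral_mono_ae hint hmx_int ?_
      filter_upwards [hae] with v hv
      have h0 := (hs v).2 (0,0) hM.1
      have hu0 : utility v ((0,0) : Entry m) = 0 := by simp [utility]
      rw [hu0] at h0
      have hlot := hM.2 _ (hs v).1
      have h1 : (s v).2 ≤ ∑ j, v j * (s v).1 j := by
        unfold utility at h0; linarith
      have hmx0 : (0:ℝ) ≤ mx v := by linarith [h1mx v hv]
      calc (s v).2 ≤ ∑ j, v j * (s v).1 j := h1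
        _ ≤ ∑ j, mx v * (s v).1 j :=
            Finset.sum_le_sum fun j _ => mul_le_mul_of_nonneg_right (hvle v j) (hlot.1 j)
        _ = mx v * ∑ j, (s v).1 j := by rw [Finset.mul_sum]
        _ ≤ mx v * 1 := mul_le_mul_of_nonneg_left hlot.2 hmx0
        _ = mx v := mul_one _
    · unfold revSel
      rw [integral_undef hint]
      exact hE_nonneg
  have hOPT : OPT D ≤ ∫ v, mx v ∂D := by
    refine Real.sSup_le ?_ hE_nonneg
    rintro r ⟨M, hM, rfl⟩
    refine Real.sSup_le ?_ hE_nonneg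
    rintro r' ⟨s, hsel, rfl⟩
    exact hrev_le M hM s hsel
  -- the uniform-price menus
  set Mk : ℕ → Finset (Entry m) := fun k =>
    insert (0, 0) (Finset.univ.image fun j : Fin m => (Pi.single j (1 : ℝ), (2 : ℝ) ^ k))
    with hMkdef
  have hutil : ∀ (v : Fin m → ℝ) (j : Fin m) (p : ℝ),
      utility v ((Pi.single j (1:ℝ), p) : Entry m) = v j - p := by
    intro v j p
    unfold utility
    congr 1
    simp [Pi.single_apply, mul_ite]
  have hMenu : ∀ k, IsMenu m (Mk k) := by
    intro k
    constructor
    · exact Finset.mem_insert_self _ _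
    · intro e he
      rcases Finset.mem_insert.mp he with h | h
      · subst h
        exact ⟨fun j => le_refl 0, by simp⟩
      · obtain ⟨j, -, rfl⟩ := Finset.mem_image.mp h
        constructor
        · intro i
          by_cases hij : i = j <;> simp [Pi.single_apply, hij]
        · simp [Pi.single_apply]
  have hargmax : ∀ v : Fin m → ℝ, ∃ j, mx v = v j := by
    intro v
    obtain ⟨j, -, hj⟩ := Finset.exists_mem_eq_sup' hne (fun j => v j)
    exact ⟨j, hj⟩
  have hRevLB : ∀ k, (2:ℝ)^k * (D (A k)).toReal ≤ Rev D (Mk k) := by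
    intro k
    set s : (Fin m → ℝ) → Entry m := fun v =>
      if v ∈ A k then (Pi.single (Classical.choose (hargmax v)) (1:ℝ), (2:ℝ)^k)
      else (0,0) with hsdef
    have hsel : IsSelection (Mk k) s := by
      intro v
      by_cases hvA : v ∈ A k
      · have hjv : mx v = v (Classical.choose (hargmax v)) := Classical.choose_spec (hargmax v)
        have hsv : s v = (Pi.single (Classical.choose (hargmax v)) (1:ℝ), (2:ℝ)^k) := by
          rw [hsdef]; simp only [if_pos hvA]
        constructor
        · rw [hsv]
          exact Finset.mem_insert_of_mem (Finset.mem_image.mpr ⟨_, Finset.mem_univ _, rfl⟩)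
        · intro e he
          rw [hsv, hutil]
          have hvk : (2:ℝ)^k ≤ mx v := hvA
          rcases Finset.mem_insert.mp he with h | h
          · subst h
            have hu0 : utility v ((0,0) : Entry m) = 0 := by simp [utility]
            rw [hu0]; linarith
          · obtain ⟨j, -, rfl⟩ := Finset.mem_image.mp h
            rw [hutil]
            have hle := hvle v j
            linarith
      · have hsv : s v = (0, 0) := by rw [hsdef]; simp only [if_neg hvA]
        constructor
        · rw [hsv]; exact Finset.mem_insert_self _ _
        · intro e he
          rw [hsv]
          have hu0 : utility v ((0,0) : Entry m) = 0 := by simp [utility]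
          rw [hu0]
          rcases Finset.mem_insert.mp he with h | h
          · subst h; rw [hu0]
          · obtain ⟨j, -, rfl⟩ := Finset.mem_image.mp h
            rw [hutil]
            have hnk : mx v < (2:ℝ)^k := lt_of_not_ge hvA
            linarith [hvle v j]
    have hval : revSel D s = (2:ℝ)^k * (D (A k)).toReal := by
      have heq : (fun v => (s v).2) = (A k).indicator (fun _ => (2:ℝ)^k) := by
        funext v
        by_cases hvA : v ∈ A k
        · rw [hsdef]
          simp only [if_pos hvA, Set.indicator_of_mem hvA]
        · rw [hsdef]
          simp only [if_neg hvA, Set.indicator_of_notMem hvA]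
      unfold revSel
      rw [show (fun v => (s v).2) = (A k).indicator (fun _ => (2:ℝ)^k) from heq]
      rw [integral_indicator_const _ (hA_meas k), smul_eq_mul, mul_comm]
      rfl
    have hbdd : BddAbove {r | ∃ s', IsSelection (Mk k) s' ∧ r = revSel D s'} := by
      refine ⟨(2:ℝ)^k, ?_⟩
      rintro r ⟨s', hs', rfl⟩
      by_cases hint : Integrable (fun v => (s' v).2) D
      · have hb : ∀ v, (s' v).2 ≤ (2:ℝ)^k := by
          intro v
          rcases Finset.mem_insert.mp (hs' v).1 with h | h
          · rw [h]; positivity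
          · obtain ⟨j, -, hj⟩ := Finset.mem_image.mp h
            rw [← hj]
        calc revSel D s' = ∫ v, (s' v).2 ∂D := rfl
          _ ≤ ∫ _, (2:ℝ)^k ∂D := integral_mono hint (integrable_const _) hb
          _ = (2:ℝ)^k := by simp
      · show revSel D s' ≤ _
        unfold revSel
        rw [integral_undef hint]
        positivity
    have hmem : (2:ℝ)^k * (D (A k)).toReal ∈
        {r | ∃ s', IsSelection (Mk k) s' ∧ r = revSel D s'} := ⟨s, hsel, hval.symm⟩
    exact le_csSup hbdd hmem
  -- pick the best k
  obtain ⟨k₀, hk₀mem, hk₀max⟩ := Finset.exists_max_image (Finset.range (K+1))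
    (fun k => (2:ℝ)^k * (D (A k)).toReal) ⟨0, Finset.mem_range.mpr (Nat.succ_pos _)⟩
  have hk₀K : k₀ ≤ K := Nat.lt_succ_iff.mp (Finset.mem_range.mp hk₀mem)
  have hSle : ∑ k ∈ Finset.range (K+1), (2:ℝ)^k * (D (A k)).toReal
      ≤ ((K:ℝ)+1) * ((2:ℝ)^k₀ * (D (A k₀)).toReal) := by
    have h := Finset.sum_le_card_nsmul (Finset.range (K+1))
      (fun k => (2:ℝ)^k * (D (A k)).toReal) _ (fun i hi => hk₀max i hi)
    rw [Finset.card_range, nsmul_eq_mul] at h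
    push_cast at h ⊢
    linarith
  refine ⟨k₀, hk₀K, ?_⟩
  have hcard : (Mk k₀).card ≤ m + 1 := by
    refine le_trans (Finset.card_insert_le _ _) ?_
    have h := Finset.card_image_le (s := (Finset.univ : Finset (Fin m)))
      (f := fun j : Fin m => (Pi.single j (1:ℝ), (2:ℝ)^k₀))
    simpa using h
  have hrev : OPT D / (2 * ((K:ℝ)+1)) ≤ Rev D (Mk k₀) := by
    have hfin : OPT D ≤ 2 * ((K:ℝ)+1) * Rev D (Mk k₀) := by
      have h2 : OPT D ≤ 2 * ((K:ℝ)+1) * ((2:ℝ)^k₀ * (D (A k₀)).toReal) := by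
        calc OPT D ≤ ∫ v, mx v ∂D := hOPT
          _ ≤ 2 * ∑ k ∈ Finset.range (K+1), (2:ℝ)^k * (D (A k)).toReal := hEint
          _ ≤ 2 * ((K:ℝ)+1) * ((2:ℝ)^k₀ * (D (A k₀)).toReal) := by
              rw [mul_assoc]; linarith
      refine le_trans h2 ?_
      exact mul_le_mul_of_nonneg_left (hRevLB k₀) (by positivity)
    rw [div_le_iff₀ (by positivity : (0:ℝ) < 2 * ((K:ℝ)+1))]
    calc OPT D ≤ 2*((K:ℝ)+1) * Rev D (Mk k₀) := hfin
      _ = Rev D (Mk k₀) * (2*((K:ℝ)+1)) := by ring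
  exact ⟨hMenu k₀, hcard, hrev⟩
end
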